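/- arXiv:2002.00409 — 4 statements merged into one kernel-verified Lean document; each statement's English description precedes it below -/
import Mathlib

section
/- Let M be a proper metric space and (X,𝓔) a finitary coarse space. Let G = G_{X,h_M(X,𝓔)} be the permutation group of the M-compactification h_M(X,𝓔) of X. Then 𝓔 ⊆ 𝓔_G. -/
open Set Filter Topology

universe u u₁ u₂ v w

section CoarsePreamble

variable {X : Type u}

/-- An entourage on `X` is a subset of `X × X` containing the diagonal. -/
def IsEntourage (E : Set (X × X)) : Prop := ∀ x : X, (x, x) ∈ E

/-- Composition `E ∘ F` of two entourages. -/
def entComp (E F : Set (X × X)) : Set (X × X) :=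
  {p | ∃ y : X, (p.1, y) ∈ E ∧ (y, p.2) ∈ F}

/-- Inverse `E⁻¹` of an entourage. -/
def entInv (E : Set (X × X)) : Set (X × X) := {p | (p.2, p.1) ∈ E}

/-- The `E`-ball `E[x]` centered at `x`. -/
def entBall (E : Set (X × X)) (x : X) : Set X := {y | (x, y) ∈ E}

/-- A coarse structure on `X`: a family of entourages covering `X × X`, closed under
`E ∘ F⁻¹` up to enlargement, and downward closed among entourages. -/
structure IsCoarseStructure (𝓔 : Set (Set (X × X))) : Prop where
  ent : ∀ E ∈ 𝓔, IsEntourage E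
  cover : ∀ p : X × X, ∃ E ∈ 𝓔, p ∈ E
  comp_subset : ∀ E ∈ 𝓔, ∀ F ∈ 𝓔, ∃ G ∈ 𝓔, entComp E (entInv F) ⊆ G
  downward : ∀ E F : Set (X × X), IsEntourage E → E ⊆ F → F ∈ 𝓔 → E ∈ 𝓔

/-- A set `B` is bounded in the coarse space `(X, 𝓔)` if `B ⊆ E[x]` for some `E ∈ 𝓔`, `x ∈ X`. -/
def IsBoundedSet (𝓔 : Set (Set (X × X))) (B : Set X) : Prop :=
  ∃ E ∈ 𝓔, ∃ x : X, B ⊆ entBall E x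

/-- A coarse structure is finitary if the cardinalities of balls of each entourage
are uniformly finite. -/
def IsFinitaryCoarse (𝓔 : Set (Set (X × X))) : Prop :=
  ∀ E ∈ 𝓔, ∃ n : ℕ, ∀ x : X, (entBall E x).Finite ∧ (entBall E x).ncard ≤ n

/-- `d : X → X → ℝ` is a metric. -/
structure IsMetricOn (d : X → X → ℝ) : Prop where
  refl : ∀ x, d x x = 0
  eq_of : ∀ x y, d x y = 0 → x = y
  symm : ∀ x y, d x y = d y x
  triangle : ∀ x y z, d x z ≤ d x y + d y z

/-- A coarse structure is metrizable if it is the coarse structure of some metric on `X`,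
i.e. consists of all entourages of uniformly bounded `d`-diameter. -/
def IsMetrizableCoarse (𝓔 : Set (Set (X × X))) : Prop :=
  ∃ d : X → X → ℝ, IsMetricOn d ∧
    𝓔 = {E | IsEntourage E ∧ ∃ n : ℕ, ∀ p ∈ E, d p.1 p.2 ≤ (n : ℝ)}

/-- A cellular entourage: a symmetric and transitive entourage (an equivalence relation). -/
def IsCellularEnt (E : Set (X × X)) : Prop :=
  (∀ p : X × X, p ∈ E → (p.2, p.1) ∈ E) ∧
    ∀ x y z : X, (x, y) ∈ E → (y, z) ∈ E → (x, z) ∈ E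

/-- `𝓑` is a base of the coarse structure `𝓔`. -/
def IsCoarseBase (𝓔 𝓑 : Set (Set (X × X))) : Prop :=
  𝓑 ⊆ 𝓔 ∧ ∀ E ∈ 𝓔, ∃ B ∈ 𝓑, E ⊆ B

/-- A coarse structure is cellular if it has a base of cellular entourages. -/
def IsCellularCoarse (𝓔 : Set (Set (X × X))) : Prop :=
  ∃ 𝓑 : Set (Set (X × X)), IsCoarseBase 𝓔 𝓑 ∧ ∀ B ∈ 𝓑, IsCellularEnt B

/-- A subset `D` is `𝓔`-discrete (thin). -/
def IsCoarseDiscrete (𝓔 : Set (Set (X × X))) (D : Set X) : Prop :=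
  ∀ E ∈ 𝓔, ∃ B : Set X, IsBoundedSet 𝓔 B ∧ ∀ x ∈ D \ B, D ∩ entBall E x = {x}

/-- The basic entourage `E_F` determined by a set `F` of permutations of `X`. -/
def permEnt (F : Set (Equiv.Perm X)) : Set (X × X) :=
  {p | p.2 = p.1 ∨ ∃ g ∈ F, p.2 = g p.1}

/-- The coarse structure `𝓔_G` generated by a set (group) `S` of permutations of `X`:
all entourages contained in `E_F` for some finite `F ⊆ S`. -/
def permCoarse (S : Set (Equiv.Perm X)) : Set (Set (X × X)) :=
  {E | IsEntourage E ∧ ∃ F : Finset (Equiv.Perm X),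
    (F : Set (Equiv.Perm X)) ⊆ S ∧ E ⊆ permEnt (F : Set (Equiv.Perm X))}

variable {M : Type v} [MetricSpace M]

/-- A function `φ : X → M` is slowly oscillating. -/
def SlowlyOscillating (𝓔 : Set (Set (X × X))) (φ : X → M) : Prop :=
  ∀ ε : ℝ, 0 < ε → ∀ E ∈ 𝓔, ∃ B : Set X, IsBoundedSet 𝓔 B ∧
    ∀ x : X, x ∉ B → EMetric.diam (φ '' entBall E x) < ENNReal.ofReal ε

/-- Two sets are asymptotically separated if `E[A] ∩ E[B]` is bounded for every `E ∈ 𝓔`. -/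
def AsymptoticallySeparated (𝓔 : Set (Set (X × X))) (A B : Set X) : Prop :=
  ∀ E ∈ 𝓔, IsBoundedSet 𝓔 ((⋃ a ∈ A, entBall E a) ∩ ⋃ b ∈ B, entBall E b)

/-- A coarse space `(X, 𝓔)` is `M`-normal. -/
def IsCoarseNormal (𝓔 : Set (Set (X × X))) (M : Type v) [MetricSpace M] : Prop :=
  ∀ A B : Set X, A.Nonempty → B.Nonempty → Disjoint A B →
    AsymptoticallySeparated 𝓔 A B →
    ∃ φ : X → M, SlowlyOscillating 𝓔 φ ∧
      ∃ ε : ℝ, 0 < ε ∧ ∀ a ∈ A, ∀ b ∈ B, ε ≤ dist (φ a) (φ b)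

/-- `so(X,𝓔;M)`: the bounded slowly oscillating functions `X → M`. -/
def soSet (𝓔 : Set (Set (X × X))) (M : Type v) [MetricSpace M] : Set (X → M) :=
  {φ | Bornology.IsBounded (Set.range φ) ∧ SlowlyOscillating 𝓔 φ}

/-- The canonical map `δ_M : X → M^{so(X,𝓔;M)}`. -/
def deltaMap (𝓔 : Set (Set (X × X))) (M : Type v) [MetricSpace M] :
    X → (↥(soSet 𝓔 M) → M) := fun x f => f.1 x

/-- The underlying set of the `M`-compactification: the closure of `δ_M(X)`. -/
def hCompSet (𝓔 : Set (Set (X × X))) (M : Type v) [MetricSpace M] :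
    Set (↥(soSet 𝓔 M) → M) := closure (Set.range (deltaMap 𝓔 M))

/-- The `M`-compactification `h_M(X,𝓔)` of the coarse space `(X,𝓔)`. -/
abbrev HComp (𝓔 : Set (Set (X × X))) (M : Type v) [MetricSpace M] :=
  ↥(hCompSet 𝓔 M)

/-- The copy of a point `x ∈ X` inside the `M`-compactification. -/
def deltaEmb (𝓔 : Set (Set (X × X))) (M : Type v) [MetricSpace M] (x : X) :
    HComp 𝓔 M := ⟨deltaMap 𝓔 M x, subset_closure (Set.mem_range_self x)⟩

/-- The permutation group `G_{X, h_M(X,𝓔)}` of the `M`-compactification, as a set of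
permutations of `X` (`X` being identified with the set of isolated points of `h_M(X,𝓔)`
via `δ_M`): those permutations induced by homeomorphisms of `h_M(X,𝓔)` fixing all
points outside (the image of) `X`. -/
def hPermGroup (𝓔 : Set (Set (X × X))) (M : Type v) [MetricSpace M] :
    Set (Equiv.Perm X) :=
  {σ | ∃ h : HComp 𝓔 M ≃ₜ HComp 𝓔 M,
    (∀ z : HComp 𝓔 M, z ∉ Set.range (deltaEmb 𝓔 M) → h z = z) ∧
    ∀ x : X, h (deltaEmb 𝓔 M x) = deltaEmb 𝓔 M (σ x)}

end CoarsePreamble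

section TopPreamble

/-- The set of isolated points of a topological space. -/
def isolatedPoints (K : Type w) [TopologicalSpace K] : Set K :=
  {x | IsOpen ({x} : Set K)}

/-- A compactification: a compact Hausdorff space with dense set of isolated points. -/
def IsCompactification (K : Type w) [TopologicalSpace K] : Prop :=
  CompactSpace K ∧ T2Space K ∧ Dense (isolatedPoints K)

/-- The permutation group `G_{K',K}` of a compactification `K`: permutations of the
set `K'` of isolated points induced by homeomorphisms of `K` fixing `K \ K'` pointwise. -/
def homeoPerms (K : Type w) [TopologicalSpace K] :
    Set (Equiv.Perm ↥(isolatedPoints K)) :=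
  {σ | ∃ h : K ≃ₜ K, (∀ z : K, z ∉ isolatedPoints K → h z = z) ∧
    ∀ x : ↥(isolatedPoints K), h x.val = (σ x).val}

/-- The oscillation of `φ : K' → M` at a point `z ∈ K`. -/
noncomputable def oscAt {K : Type w} [TopologicalSpace K] {M : Type v} [MetricSpace M]
    (φ : ↥(isolatedPoints K) → M) (z : K) : ENNReal :=
  ⨅ (O : Set K) (_ : IsOpen O) (_ : z ∈ O),
    EMetric.diam (φ '' (Subtype.val ⁻¹' O))

/-- A compactification `K` is `M`-soft. -/
def IsMSoft (K : Type w) [TopologicalSpace K] (M : Type v) [MetricSpace M] : Prop :=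
  ∀ φ : ↥(isolatedPoints K) → M, Bornology.IsBounded (Set.range φ) →
    (∃ z : K, 0 < oscAt φ z) →
    ∃ σ ∈ homeoPerms K, ∃ ε : ℝ, 0 < ε ∧
      {x : ↥(isolatedPoints K) | ε ≤ dist (φ (σ x)) (φ x)}.Infinite

/-- A compactification `K` is soft. -/
def IsSoft (K : Type w) [TopologicalSpace K] : Prop :=
  ∀ A B : Set ↥(isolatedPoints K), Disjoint A B →
    (closure (Subtype.val '' A) ∩ closure (Subtype.val '' B)).Nonempty →
    ∃ σ ∈ homeoPerms K, {x : ↥(isolatedPoints K) | x ∈ A ∧ σ x ∈ B}.Infinite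

/-- `uc(K',K;M)`: restrictions to the set of isolated points of continuous functions `K → M`. -/
def ucSet (K : Type w) [TopologicalSpace K] (M : Type v) [MetricSpace M] :
    Set (↥(isolatedPoints K) → M) :=
  {φ | ∃ f : K → M, Continuous f ∧ ∀ x : ↥(isolatedPoints K), f x.val = φ x}

/-- `uc(X, h_M(X,𝓔); M)`: restrictions to `X` (via `δ_M`) of continuous functions
`h_M(X,𝓔) → M`. -/
def ucHComp {X : Type u} (𝓔 : Set (Set (X × X))) (M : Type v) [MetricSpace M] :
    Set (X → M) :=
  {φ | ∃ f : HComp 𝓔 M → M, Continuous f ∧ ∀ x : X, f (deltaEmb 𝓔 M x) = φ x}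

/-- The cardinal `Δ`: the smallest cardinality of a base of a cellular finitary coarse
structure on `ω` containing no infinite discrete subsets. -/
noncomputable def smallDeltaCard : Cardinal.{0} :=
  sInf {c : Cardinal.{0} | ∃ 𝓔 : Set (Set (ℕ × ℕ)), IsCoarseStructure 𝓔 ∧
    IsCellularCoarse 𝓔 ∧ IsFinitaryCoarse 𝓔 ∧
    (∀ D : Set ℕ, IsCoarseDiscrete 𝓔 D → D.Finite) ∧
    ∃ 𝓑 : Set (Set (ℕ × ℕ)), IsCoarseBase 𝓔 𝓑 ∧ Cardinal.mk ↥𝓑 = c}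

/-- The cardinal `𝔭`. -/
noncomputable def pCard : Cardinal.{0} :=
  sInf {c : Cardinal.{0} | ∃ F : Set (Set ℕ), (∀ A ∈ F, A.Infinite) ∧
    (∀ S : Finset (Set ℕ), (S : Set (Set ℕ)) ⊆ F → (⋂ A ∈ S, A).Infinite) ∧
    (∀ I : Set ℕ, I.Infinite → ∃ A ∈ F, (I \ A).Infinite) ∧
    Cardinal.mk ↥F = c}

/-- The character `χ(x;K)` of a point. -/
noncomputable def charAt (K : Type w) [TopologicalSpace K] (x : K) : Cardinal.{w} :=
  sInf {c : Cardinal.{w} | ∃ 𝓑 : Set (Set K), (∀ U ∈ 𝓑, IsOpen U ∧ x ∈ U) ∧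
    (∀ V : Set K, IsOpen V → x ∈ V → ∃ U ∈ 𝓑, U ⊆ V) ∧ Cardinal.mk ↥𝓑 = c}

/-- The character `χ(K)` of a space. -/
noncomputable def spaceChar (K : Type w) [TopologicalSpace K] : Cardinal.{w} :=
  ⨆ x : K, charAt K x

/-- A corona: a compact Hausdorff space homeomorphic to the remainder of a
compactification of the countable discrete space `ℕ`. -/
def IsCorona (K : Type w) [TopologicalSpace K] : Prop :=
  CompactSpace K ∧ T2Space K ∧
    ∃ (C : Type w) (_ : TopologicalSpace C), IsCompactification C ∧
      (isolatedPoints C).Infinite ∧ (isolatedPoints C).Countable ∧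
      Nonempty (K ≃ₜ ↥((isolatedPoints C)ᶜ))

/-- A soft corona. -/
def IsSoftCorona (K : Type w) [TopologicalSpace K] : Prop :=
  CompactSpace K ∧ T2Space K ∧
    ∃ (C : Type w) (_ : TopologicalSpace C), IsCompactification C ∧ IsSoft C ∧
      (isolatedPoints C).Infinite ∧ (isolatedPoints C).Countable ∧
      Nonempty (K ≃ₜ ↥((isolatedPoints C)ᶜ))

/-- An `M`-soft corona. -/
def IsMSoftCorona (K : Type w) [TopologicalSpace K] (M : Type v) [MetricSpace M] : Prop :=
  CompactSpace K ∧ T2Space K ∧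
    ∃ (C : Type w) (_ : TopologicalSpace C), IsCompactification C ∧ IsMSoft C M ∧
      (isolatedPoints C).Infinite ∧ (isolatedPoints C).Countable ∧
      Nonempty (K ≃ₜ ↥((isolatedPoints C)ᶜ))

end TopPreamble


section MyAux

variable {X : Type u}

theorem myDiagMem {𝓔 : Set (Set (X × X))} (hcs : IsCoarseStructure 𝓔) [Nonempty X] :
    {p : X × X | p.1 = p.2} ∈ 𝓔 := by
  obtain ⟨x⟩ := ‹Nonempty X›
  obtain ⟨E, hE, -⟩ := hcs.cover (x, x)
  refine hcs.downward _ E (fun y => rfl) ?_ hE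
  rintro ⟨a, b⟩ hp
  cases hp
  exact hcs.ent E hE a

theorem myEntInvInv (E : Set (X × X)) : entInv (entInv E) = E := rfl

theorem myInvMem {𝓔 : Set (Set (X × X))} (hcs : IsCoarseStructure 𝓔) {E : Set (X × X)}
    (hE : E ∈ 𝓔) [Nonempty X] : entInv E ∈ 𝓔 := by
  obtain ⟨G, hG, hsub⟩ := hcs.comp_subset _ (myDiagMem hcs) E hE
  refine hcs.downward _ G (fun x => hcs.ent E hE x) ?_ hG
  intro p hp
  exact hsub ⟨p.1, rfl, hp⟩

theorem myCompMem {𝓔 : Set (Set (X × X))} (hcs : IsCoarseStructure 𝓔) {E F : Set (X × X)}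
    (hE : E ∈ 𝓔) (hF : F ∈ 𝓔) [Nonempty X] : ∃ G ∈ 𝓔, entComp E F ⊆ G := by
  obtain ⟨G, hG, hsub⟩ := hcs.comp_subset _ hE _ (myInvMem hcs hF)
  rw [myEntInvInv] at hsub
  exact ⟨G, hG, hsub⟩

theorem myUnionInvMem {𝓔 : Set (Set (X × X))} (hcs : IsCoarseStructure 𝓔) {E : Set (X × X)}
    (hE : E ∈ 𝓔) [Nonempty X] : E ∪ entInv E ∈ 𝓔 := by
  obtain ⟨G, hG, hsub⟩ := hcs.comp_subset _ hE _ hE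
  refine hcs.downward _ G (fun x => Or.inl (hcs.ent E hE x)) ?_ hG
  rintro ⟨a, b⟩ (h | h)
  · exact hsub ⟨b, h, hcs.ent E hE b⟩
  · exact hsub ⟨a, hcs.ent E hE a, h⟩

theorem myBoundedFinite {𝓔 : Set (Set (X × X))} (hfin : IsFinitaryCoarse 𝓔) {B : Set X}
    (hB : IsBoundedSet 𝓔 B) : B.Finite := by
  obtain ⟨E, hE, x, hsub⟩ := hB
  obtain ⟨n, hn⟩ := hfin E hE
  exact (hn x).1.subset hsub

end MyAux

section MyAnalytic

variable {X : Type u} {M : Type v} [MetricSpace M] {𝓔 : Set (Set (X × X))}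

theorem mySoComp [Nonempty X] (hcs : IsCoarseStructure 𝓔) (σ : Equiv.Perm X)
    {E : Set (X × X)} (hE : E ∈ 𝓔) (hσ : ∀ x, (x, σ x) ∈ E)
    {f : X → M} (hf : f ∈ soSet 𝓔 M) : (fun x => f (σ x)) ∈ soSet 𝓔 M := by
  constructor
  · refine hf.1.subset ?_
    rintro _ ⟨x, rfl⟩
    exact ⟨σ x, rfl⟩
  · intro ε hε E' hE'
    obtain ⟨G, hG, hsub⟩ := myCompMem hcs hE' hE
    obtain ⟨B, hB, hdiam⟩ := hf.2 ε hε G hG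
    refine ⟨B, hB, fun x hx => ?_⟩
    refine lt_of_le_of_lt (EMetric.diam_mono ?_) (hdiam x hx)
    rintro _ ⟨y, hy, rfl⟩
    exact ⟨σ y, hsub ⟨y, hy, hσ y⟩, rfl⟩

theorem myPermMemHPermGroup (M : Type v) [MetricSpace M] [Nonempty X]
    (hcs : IsCoarseStructure 𝓔) (hfin : IsFinitaryCoarse 𝓔)
    (σ : Equiv.Perm X) {E : Set (X × X)} (hE : E ∈ 𝓔)
    (h1 : ∀ x, (x, σ x) ∈ E) (h2 : ∀ x, (x, σ.symm x) ∈ E) :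
    σ ∈ hPermGroup 𝓔 M := by
  classical
  let cmp : ↥(soSet 𝓔 M) → ↥(soSet 𝓔 M) := fun f =>
    ⟨fun x => f.1 (σ x), mySoComp hcs σ hE h1 f.2⟩
  let cmp' : ↥(soSet 𝓔 M) → ↥(soSet 𝓔 M) := fun f =>
    ⟨fun x => f.1 (σ.symm x), mySoComp hcs σ.symm hE h2 f.2⟩
  have hcc : ∀ f, cmp' (cmp f) = f := by
    intro f; apply Subtype.ext; funext x
    show f.1 (σ (σ.symm x)) = f.1 x
    rw [Equiv.apply_symm_apply]
  have hcc' : ∀ f, cmp (cmp' f) = f := by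
    intro f; apply Subtype.ext; funext x
    show f.1 (σ.symm (σ x)) = f.1 x
    rw [Equiv.symm_apply_apply]
  let T : (↥(soSet 𝓔 M) → M) → (↥(soSet 𝓔 M) → M) := fun z f => z (cmp f)
  let T' : (↥(soSet 𝓔 M) → M) → (↥(soSet 𝓔 M) → M) := fun z f => z (cmp' f)
  have Tcont : Continuous T := continuous_pi fun f => continuous_apply (cmp f)
  have T'cont : Continuous T' := continuous_pi fun f => continuous_apply (cmp' f)
  have Tdelta : ∀ x : X, T (deltaMap 𝓔 M x) = deltaMap 𝓔 M (σ x) := fun x => rfl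
  have T'delta : ∀ x : X, T' (deltaMap 𝓔 M x) = deltaMap 𝓔 M (σ.symm x) := fun x => rfl
  have hmapsT : ∀ z ∈ hCompSet 𝓔 M, T z ∈ hCompSet 𝓔 M := by
    intro z hz
    have h1' : T '' Set.range (deltaMap 𝓔 M) ⊆ Set.range (deltaMap 𝓔 M) := by
      rintro _ ⟨_, ⟨x, rfl⟩, rfl⟩
      exact ⟨σ x, (Tdelta x).symm⟩
    have := image_closure_subset_closure_image Tcont (s := Set.range (deltaMap 𝓔 M))
      ⟨z, hz, rfl⟩
    exact closure_mono h1' this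
  have hmapsT' : ∀ z ∈ hCompSet 𝓔 M, T' z ∈ hCompSet 𝓔 M := by
    intro z hz
    have h1' : T' '' Set.range (deltaMap 𝓔 M) ⊆ Set.range (deltaMap 𝓔 M) := by
      rintro _ ⟨_, ⟨x, rfl⟩, rfl⟩
      exact ⟨σ.symm x, (T'delta x).symm⟩
    have := image_closure_subset_closure_image T'cont (s := Set.range (deltaMap 𝓔 M))
      ⟨z, hz, rfl⟩
    exact closure_mono h1' this
  have key : ∀ z : ↥(soSet 𝓔 M) → M, z ∈ hCompSet 𝓔 M →
      z ∉ Set.range (deltaMap 𝓔 M) → ∀ f : ↥(soSet 𝓔 M), z (cmp f) = z f := by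
    intro z hz hz' f
    have hle : ∀ ε : ℝ, 0 < ε → dist (z (cmp f)) (z f) ≤ ε := by
      intro ε hε
      obtain ⟨B, hB, hdiam⟩ := f.2.2 ε hε E hE
      have hBfin : B.Finite := myBoundedFinite hfin hB
      have hclosed : IsClosed {w : ↥(soSet 𝓔 M) → M | dist (w (cmp f)) (w f) ≤ ε} :=
        isClosed_le ((continuous_apply (cmp f)).dist (continuous_apply f)) continuous_const
      have hsubC : deltaMap 𝓔 M '' Bᶜ ⊆ {w | dist (w (cmp f)) (w f) ≤ ε} := by
        rintro _ ⟨x, hx, rfl⟩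
        have hm1 : f.1 (σ x) ∈ f.1 '' entBall E x := ⟨σ x, h1 x, rfl⟩
        have hm2 : f.1 x ∈ f.1 '' entBall E x := ⟨x, hcs.ent E hE x, rfl⟩
        have hlt := lt_of_le_of_lt (EMetric.edist_le_diam_of_mem hm1 hm2) (hdiam x hx)
        exact le_of_lt (edist_lt_ofReal.mp hlt)
      have hcover : Set.range (deltaMap 𝓔 M) ⊆
          deltaMap 𝓔 M '' B ∪ deltaMap 𝓔 M '' Bᶜ := by
        rintro _ ⟨x, rfl⟩
        by_cases hx : x ∈ B
        · exact Or.inl ⟨x, hx, rfl⟩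
        · exact Or.inr ⟨x, hx, rfl⟩
      have hz2 : z ∈ closure (deltaMap 𝓔 M '' B ∪ deltaMap 𝓔 M '' Bᶜ) :=
        closure_mono hcover hz
      rw [closure_union, ((hBfin.image _).isClosed).closure_eq] at hz2
      rcases hz2 with h | h
      · exact absurd (Set.image_subset_range _ _ h) hz'
      · exact closure_minimal hsubC hclosed h
    by_contra hne
    have hpos : 0 < dist (z (cmp f)) (z f) := dist_pos.mpr hne
    have := hle (dist (z (cmp f)) (z f) / 2) (by linarith)
    linarith
  refine ⟨⟨⟨fun z => ⟨T z.1, hmapsT z.1 z.2⟩, fun z => ⟨T' z.1, hmapsT' z.1 z.2⟩, ?_, ?_⟩,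
      (Tcont.comp continuous_subtype_val).subtype_mk _,
      (T'cont.comp continuous_subtype_val).subtype_mk _⟩, ?_, ?_⟩
  · intro z
    apply Subtype.ext
    funext f
    show z.1 (cmp (cmp' f)) = z.1 f
    rw [hcc' f]
  · intro z
    apply Subtype.ext
    funext f
    show z.1 (cmp' (cmp f)) = z.1 f
    rw [hcc f]
  · intro z hz
    apply Subtype.ext
    funext f
    refine key z.1 z.2 ?_ f
    rintro ⟨x, hx⟩
    exact hz ⟨x, Subtype.ext hx⟩
  · intro x
    exact Subtype.ext (Tdelta x)

end MyAnalytic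

section MyColoring

variable {X : Type u}

/-- `e` is an edge of the symmetric relation `S`. -/
def MyEdgeOf (S : Set (X × X)) (e : Sym2 X) : Prop :=
  ¬ e.IsDiag ∧ ∀ x y : X, e = s(x, y) → (x, y) ∈ S

/-- Greedy transfinite edge coloring. -/
noncomputable def myEdgeCol (S : Set (X × X)) : Sym2 X → ℕ :=
  (IsWellFounded.wf (r := @WellOrderingRel (Sym2 X))).fix
    (fun e ih => sInf {i : ℕ | ∀ e' (h : WellOrderingRel e' e),
      MyEdgeOf S e' → (∃ v, v ∈ e' ∧ v ∈ e) → ih e' h ≠ i})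

theorem myEdgeCol_eq (S : Set (X × X)) (e : Sym2 X) :
    myEdgeCol S e = sInf {i : ℕ | ∀ e', WellOrderingRel e' e →
      MyEdgeOf S e' → (∃ v, v ∈ e' ∧ v ∈ e) → myEdgeCol S e' ≠ i} := by
  rw [myEdgeCol, WellFounded.fix_eq]

theorem myAdjFinite (S : Set (X × X)) {n : ℕ}
    (hfin : ∀ x : X, (entBall S x).Finite ∧ (entBall S x).ncard ≤ n) (e : Sym2 X) :
    {e' : Sym2 X | MyEdgeOf S e' ∧ ∃ v, v ∈ e' ∧ v ∈ e}.Finite ∧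
      {e' : Sym2 X | MyEdgeOf S e' ∧ ∃ v, v ∈ e' ∧ v ∈ e}.ncard ≤ 2 * n := by
  induction e using Sym2.ind with
  | _ x y =>
    have hsub : {e' : Sym2 X | MyEdgeOf S e' ∧ ∃ v, v ∈ e' ∧ v ∈ s(x, y)} ⊆
        (fun w => s(x, w)) '' entBall S x ∪ (fun w => s(y, w)) '' entBall S y := by
      rintro e' ⟨⟨hd, hS⟩, v, hv, hv'⟩
      obtain ⟨w, rfl⟩ := Sym2.mem_iff_exists.mp hv
      have hw : (v, w) ∈ S := hS v w rfl
      rcases Sym2.mem_iff.mp hv' with rfl | rfl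
      · exact Or.inl ⟨w, hw, rfl⟩
      · exact Or.inr ⟨w, hw, rfl⟩
    have hfin' : ((fun w => s(x, w)) '' entBall S x ∪ (fun w => s(y, w)) '' entBall S y).Finite :=
      ((hfin x).1.image _).union ((hfin y).1.image _)
    refine ⟨hfin'.subset hsub, le_trans (Set.ncard_le_ncard hsub hfin') ?_⟩
    refine le_trans (Set.ncard_union_le _ _) ?_
    have h1 : ((fun w => s(x, w)) '' entBall S x).ncard ≤ n :=
      le_trans (Set.ncard_image_le (hfin x).1) (hfin x).2
    have h2 : ((fun w => s(y, w)) '' entBall S y).ncard ≤ n :=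
      le_trans (Set.ncard_image_le (hfin y).1) (hfin y).2
    omega

theorem myEdgeCol_spec (S : Set (X × X)) {n : ℕ}
    (hfin : ∀ x : X, (entBall S x).Finite ∧ (entBall S x).ncard ≤ n) (e : Sym2 X) :
    myEdgeCol S e ≤ 2 * n ∧ ∀ e', WellOrderingRel e' e → MyEdgeOf S e' →
      (∃ v, v ∈ e' ∧ v ∈ e) → myEdgeCol S e' ≠ myEdgeCol S e := by
  classical
  obtain ⟨hAfin, hAcard⟩ := myAdjFinite S hfin e
  set A := {e' : Sym2 X | MyEdgeOf S e' ∧ ∃ v, v ∈ e' ∧ v ∈ e} with hA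
  obtain ⟨i, hi1, hi2⟩ : ∃ i, i ≤ 2 * n ∧ i ∉ myEdgeCol S '' A := by
    by_contra h
    push_neg at h
    have hsub : ↑(Finset.range (2 * n + 1)) ⊆ myEdgeCol S '' A := by
      intro i hi
      rw [Finset.coe_range, Set.mem_Iio] at hi
      exact h i (by omega)
    have hc := Set.ncard_le_ncard hsub (hAfin.image _)
    rw [Set.ncard_coe_finset, Finset.card_range] at hc
    have hc2 : (myEdgeCol S '' A).ncard ≤ 2 * n :=
      le_trans (Set.ncard_image_le hAfin) hAcard
    omega
  have himem : i ∈ {j : ℕ | ∀ e', WellOrderingRel e' e →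
      MyEdgeOf S e' → (∃ v, v ∈ e' ∧ v ∈ e) → myEdgeCol S e' ≠ j} := by
    intro e' _ he' hsh hcol
    exact hi2 ⟨e', ⟨he', hsh⟩, hcol⟩
  constructor
  · rw [myEdgeCol_eq]
    exact le_trans (Nat.sInf_le himem) hi1
  · have := Nat.sInf_mem (⟨i, himem⟩ : Set.Nonempty _)
    rw [← myEdgeCol_eq] at this
    exact this

theorem myEdgeCol_ne (S : Set (X × X)) {n : ℕ}
    (hfin : ∀ x : X, (entBall S x).Finite ∧ (entBall S x).ncard ≤ n) {e e' : Sym2 X}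
    (he : MyEdgeOf S e) (he' : MyEdgeOf S e') (hne : e ≠ e')
    (hsh : ∃ v, v ∈ e ∧ v ∈ e') : myEdgeCol S e ≠ myEdgeCol S e' := by
  obtain ⟨v, hv, hv'⟩ := hsh
  rcases trichotomous_of WellOrderingRel e e' with h | h | h
  · exact fun hc => (myEdgeCol_spec S hfin e').2 e h he ⟨v, hv, hv'⟩ hc
  · exact absurd h hne
  · exact fun hc => ((myEdgeCol_spec S hfin e).2 e' h he' ⟨v, hv', hv⟩) hc.symm

end MyColoring

/-- If `(X,𝓔)` is a finitary coarse space and `G` is the permutation group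
of its `M`-compactification, then `𝓔 ⊆ 𝓔_G`. -/
theorem statement1 {X : Type u} (M : Type v) [MetricSpace M] [ProperSpace M] [Nontrivial M]
    (𝓔 : Set (Set (X × X))) (hcs : IsCoarseStructure 𝓔) (hfin : IsFinitaryCoarse 𝓔) :
    𝓔 ⊆ permCoarse (hPermGroup 𝓔 M) := by
  classical
  intro E hE
  cases isEmpty_or_nonempty X with
  | inl h =>
    refine ⟨hcs.ent E hE, ∅, by simp, ?_⟩
    rintro ⟨a, b⟩ -
    exact (IsEmpty.false a).elim
  | inr h =>
    set S := E ∪ entInv E with hSdef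
    have hS : S ∈ 𝓔 := myUnionInvMem hcs hE
    have hSsymm : ∀ p ∈ S, (p.2, p.1) ∈ S := by
      rintro ⟨a, b⟩ (h' | h')
      · exact Or.inr h'
      · exact Or.inl h'
    have hSent : IsEntourage S := fun x => Or.inl (hcs.ent E hE x)
    obtain ⟨n, hn⟩ := hfin S hS
    set R : ℕ → X → X → Prop := fun i x y => x ≠ y ∧ (x, y) ∈ S ∧ myEdgeCol S s(x, y) = i
      with hR
    have hedge : ∀ {x y : X}, x ≠ y → (x, y) ∈ S → MyEdgeOf S s(x, y) := by
      intro x y hne hxy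
      refine ⟨fun hd => hne (Sym2.mk_isDiag_iff.mp hd), ?_⟩
      intro a b hab
      rcases Sym2.eq_iff.mp hab with ⟨ha, hb⟩ | ⟨ha, hb⟩
      · rw [← ha, ← hb]; exact hxy
      · rw [← ha, ← hb]; exact hSsymm (x, y) hxy
    have hRsymm : ∀ i x y, R i x y → R i y x := by
      rintro i x y ⟨h1, h2, h3⟩
      exact ⟨Ne.symm h1, hSsymm (x, y) h2, by rw [Sym2.eq_swap]; exact h3⟩
    have hRuniq : ∀ i x y y', R i x y → R i x y' → y = y' := by
      rintro i x y y' ⟨h1, h2, h3⟩ ⟨h1', h2', h3'⟩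
      by_contra hyy
      have hneq : s(x, y) ≠ s(x, y') := by
        intro hc
        rcases Sym2.eq_iff.mp hc with ⟨-, hb⟩ | ⟨-, hb⟩
        · exact hyy hb
        · exact h1 hb.symm
      exact myEdgeCol_ne S hn (hedge h1 h2) (hedge h1' h2') hneq
        ⟨x, Sym2.mem_mk_left x y, Sym2.mem_mk_left x y'⟩ (h3.trans h3'.symm)
    set σf : ℕ → X → X := fun i x => if h : ∃ y, R i x y then h.choose else x with hσf
    have hσR : ∀ i x, (∃ y, R i x y) → R i x (σf i x) := by
      intro i x hex
      simp only [hσf]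
      rw [dif_pos hex]
      exact hex.choose_spec
    have hσn : ∀ i x, ¬ (∃ y, R i x y) → σf i x = x := by
      intro i x hex
      simp only [hσf]
      rw [dif_neg hex]
    have hσval : ∀ i x y, R i x y → σf i x = y := by
      intro i x y hr
      exact hRuniq i x _ _ (hσR i x ⟨y, hr⟩) hr
    have hinv : ∀ i, Function.Involutive (σf i) := by
      intro i x
      by_cases hex : ∃ y, R i x y
      · exact hσval i (σf i x) x (hRsymm _ _ _ (hσR i x hex))
      · rw [hσn i x hex, hσn i x hex]
    have hgraph : ∀ i x, (x, σf i x) ∈ S := by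
      intro i x
      by_cases hex : ∃ y, R i x y
      · exact (hσR i x hex).2.1
      · rw [hσn i x hex]; exact hSent x
    set perms : ℕ → Equiv.Perm X := fun i => Function.Involutive.toPerm (σf i) (hinv i)
      with hperms
    have hpermsymm : ∀ i x, (perms i).symm x = σf i x := by
      intro i x
      simp only [hperms]
      rw [Function.Involutive.toPerm_symm]
      rfl
    have hmem : ∀ i, perms i ∈ hPermGroup 𝓔 M :=
      fun i => myPermMemHPermGroup M hcs hfin (perms i) hS
        (fun x => hgraph i x) (fun x => by rw [hpermsymm]; exact hgraph i x)
    refine ⟨hcs.ent E hE, (Finset.range (2 * n + 1)).image perms, ?_, ?_⟩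
    · intro g hg
      simp only [Finset.coe_image, Set.mem_image, Finset.mem_coe] at hg
      obtain ⟨i, -, rfl⟩ := hg
      exact hmem i
    · rintro ⟨x, y⟩ hxy
      by_cases hne : y = x
      · exact Or.inl hne
      · refine Or.inr ⟨perms (myEdgeCol S s(x, y)), ?_, ?_⟩
        · simp only [Finset.coe_image, Set.mem_image, Finset.mem_coe, Finset.mem_range]
          refine ⟨_, ?_, rfl⟩
          have := (myEdgeCol_spec S hn s(x, y)).1
          omega
        · have hxyS : (x, y) ∈ S := Or.inl hxy
          exact (hσval _ x y ⟨fun h' => hne h'.symm, hxyS, rfl⟩).symm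
end

section
/- Let (X,𝓔) be a finitary and metrizable coarse space, let G = G_{X,h_ℝ(X,𝓔)} be the permutation group of the Higson compactification h_ℝ(X,𝓔) of X, and let 𝓔_G be the coarse structure on X generated by the action of G. Then 𝓔 = 𝓔_G. -/
open Set Filter Topology

universe u u₁ u₂ v w

namespace Statement3Aux
open Set
open scoped Classical

variable {X : Type u}

/-- The metric entourage of radius `n`. -/
def mball (d : X → X → ℝ) (n : ℕ) : Set (X × X) := {p | d p.1 p.2 ≤ (n : ℝ)}

/-- Bundled hypotheses. -/
structure Setup (𝓔 : Set (Set (X × X))) (d : X → X → ℝ) : Prop where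
  hm : IsMetricOn d
  hE : 𝓔 = {E | IsEntourage E ∧ ∃ n : ℕ, ∀ p ∈ E, d p.1 p.2 ≤ (n : ℝ)}
  hfin : IsFinitaryCoarse 𝓔

namespace Setup

variable {𝓔 : Set (Set (X × X))} {d : X → X → ℝ} (S : Setup 𝓔 d)
include S

theorem d_nonneg (x y : X) : 0 ≤ d x y := by
  have h := S.hm.triangle x y x
  rw [S.hm.refl, S.hm.symm y x] at h
  linarith

theorem mem_iff {E : Set (X × X)} :
    E ∈ 𝓔 ↔ IsEntourage E ∧ ∃ n : ℕ, ∀ p ∈ E, d p.1 p.2 ≤ (n : ℝ) := by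
  rw [S.hE]; rfl

theorem mball_mem (n : ℕ) : mball d n ∈ 𝓔 := by
  rw [S.mem_iff]
  exact ⟨fun x => by simp [mball, S.hm.refl], n, fun p hp => hp⟩

omit S in
theorem mem_mball_ball {n : ℕ} {x y : X} : y ∈ entBall (mball d n) x ↔ d x y ≤ (n : ℝ) :=
  Iff.rfl

theorem mball_ball_finite (n : ℕ) (x : X) : (entBall (mball d n) x).Finite :=
  ((S.hfin _ (S.mball_mem n)).choose_spec x).1

theorem finite_of_bounded {B : Set X} (hB : IsBoundedSet 𝓔 B) : B.Finite := by
  obtain ⟨E, hE, x, hx⟩ := hB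
  exact ((S.hfin E hE).choose_spec x).1.subset hx

theorem bounded_of_finite [Nonempty X] {B : Set X} (hB : B.Finite) : IsBoundedSet 𝓔 B := by
  obtain ⟨x0⟩ := ‹Nonempty X›
  refine ⟨mball d (hB.toFinset.sup fun b => ⌈d x0 b⌉₊), S.mball_mem _, x0, fun b hb => ?_⟩
  rw [mem_mball_ball]
  calc d x0 b ≤ (⌈d x0 b⌉₊ : ℝ) := Nat.le_ceil _
    _ ≤ _ := Nat.cast_le.mpr (Finset.le_sup (f := fun b => ⌈d x0 b⌉₊) (hB.mem_toFinset.mpr hb))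

theorem subset_mball {E : Set (X × X)} (hE : E ∈ 𝓔) : ∃ n : ℕ, E ⊆ mball d n := by
  obtain ⟨-, n, hn⟩ := S.mem_iff.mp hE
  exact ⟨n, fun p hp => hn p hp⟩

end Setup
end Statement3Aux
namespace Statement3Aux
open Set
variable {X : Type u}

/-- The set underlying the Higson compactification is compact. -/
theorem isCompact_hCompSet (𝓔 : Set (Set (X × X))) : IsCompact (hCompSet 𝓔 ℝ) := by
  have hK : IsCompact (Set.pi univ fun f : ↥(soSet 𝓔 ℝ) => closure (range f.1)) :=
    isCompact_univ_pi fun f =>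
      Metric.isCompact_of_isClosed_isBounded isClosed_closure f.2.1.closure
  refine hK.of_isClosed_subset isClosed_closure (closure_minimal ?_ ?_)
  · rintro _ ⟨x, rfl⟩ f _
    exact subset_closure ⟨x, rfl⟩
  · exact isClosed_set_pi fun f _ => isClosed_closure

theorem dense_deltaEmb (𝓔 : Set (Set (X × X))) : Dense (range (deltaEmb 𝓔 ℝ)) := by
  intro w
  rw [closure_subtype]
  have : Subtype.val '' range (deltaEmb 𝓔 ℝ) = range (deltaMap 𝓔 ℝ) := by
    rw [← range_comp]; rfl
  rw [this]
  exact w.2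

namespace Setup

variable {𝓔 : Set (Set (X × X))} {d : X → X → ℝ} (S : Setup 𝓔 d)
include S

/-- Composition with a permutation of bounded displacement preserves `soSet`. -/
theorem so_comp (g : Equiv.Perm X) (n : ℕ) (hg : ∀ x, d x (g x) ≤ (n : ℝ))
    {f : X → ℝ} (hf : f ∈ soSet 𝓔 ℝ) : (fun x => f (g x)) ∈ soSet 𝓔 ℝ := by
  refine ⟨hf.1.subset ?_, ?_⟩
  · rintro _ ⟨x, rfl⟩; exact ⟨g x, rfl⟩
  · intro ε hε E hE
    obtain ⟨m, hm⟩ := S.subset_mball hE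
    obtain ⟨B, hBb, hB⟩ := hf.2 ε hε (mball d (m + 2 * n)) (S.mball_mem _)
    obtain ⟨E', hE', x', hx'⟩ := hBb
    obtain ⟨m', hm'⟩ := S.subset_mball hE'
    refine ⟨(fun x => g x) ⁻¹' B, ⟨mball d (m' + n), S.mball_mem _, x', fun b hb => ?_⟩,
      fun x hx => ?_⟩
    · have h1 : d x' (g b) ≤ (m' : ℝ) := hm' (hx' hb)
      have h2 : d (g b) b ≤ (n : ℝ) := by rw [S.hm.symm]; exact hg b
      rw [mem_mball_ball]
      push_cast
      calc d x' b ≤ d x' (g b) + d (g b) b := S.hm.triangle _ _ _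
        _ ≤ (m' : ℝ) + n := add_le_add h1 h2
    · have hgx : g x ∉ B := hx
      refine lt_of_le_of_lt (EMetric.diam_mono ?_) (hB (g x) hgx)
      rintro _ ⟨y, hy, rfl⟩
      refine ⟨g y, ?_, rfl⟩
      have hxy : d x y ≤ (m : ℝ) := hm hy
      rw [mem_mball_ball]
      push_cast
      calc d (g x) (g y) ≤ d (g x) x + d x (g y) := S.hm.triangle _ _ _
        _ ≤ d (g x) x + (d x y + d y (g y)) := by
            exact add_le_add le_rfl (S.hm.triangle _ _ _)
        _ ≤ (n : ℝ) + ((m : ℝ) + n) := by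
            have := hg x; have := hg y
            have hsym : d (g x) x = d x (g x) := S.hm.symm _ _
            linarith
        _ ≤ (m : ℝ) + 2 * n := by ring_nf; linarith

/-- The induced self-map of `so(X,𝓔;ℝ)`. -/
def compF (g : Equiv.Perm X) (n : ℕ) (hg : ∀ x, d x (g x) ≤ (n : ℝ)) :
    ↥(soSet 𝓔 ℝ) → ↥(soSet 𝓔 ℝ) :=
  fun f => ⟨fun x => f.1 (g x), S.so_comp g n hg f.2⟩

/-- The induced self-map of `ℝ^{so}`. -/
def Phi (g : Equiv.Perm X) (n : ℕ) (hg : ∀ x, d x (g x) ≤ (n : ℝ)) :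
    (↥(soSet 𝓔 ℝ) → ℝ) → (↥(soSet 𝓔 ℝ) → ℝ) :=
  fun w f => w (S.compF g n hg f)

theorem Phi_delta {g : Equiv.Perm X} {n : ℕ} {hg : ∀ x, d x (g x) ≤ (n : ℝ)} (x : X) :
    S.Phi g n hg (deltaMap 𝓔 ℝ x) = deltaMap 𝓔 ℝ (g x) := rfl

theorem Phi_cont (g : Equiv.Perm X) (n : ℕ) (hg : ∀ x, d x (g x) ≤ (n : ℝ)) :
    Continuous (S.Phi g n hg) := continuous_pi fun f => continuous_apply _

theorem Phi_maps {g : Equiv.Perm X} {n : ℕ} {hg : ∀ x, d x (g x) ≤ (n : ℝ)}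
    {w : ↥(soSet 𝓔 ℝ) → ℝ} (hw : w ∈ hCompSet 𝓔 ℝ) : S.Phi g n hg w ∈ hCompSet 𝓔 ℝ := by
  have h1 : S.Phi g n hg w ∈ S.Phi g n hg '' closure (range (deltaMap 𝓔 ℝ)) := ⟨w, hw, rfl⟩
  have h2 := image_closure_subset_closure_image (s := range (deltaMap 𝓔 ℝ)) (S.Phi_cont g n hg)
  refine closure_mono ?_ (h2 h1)
  rintro _ ⟨_, ⟨x, rfl⟩, rfl⟩
  exact ⟨g x, (Phi_delta S x).symm⟩

theorem Phi_fixes {g : Equiv.Perm X} {n : ℕ} {hg : ∀ x, d x (g x) ≤ (n : ℝ)}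
    (w : HComp 𝓔 ℝ) (hw : w ∉ range (deltaEmb 𝓔 ℝ)) : S.Phi g n hg w.1 = w.1 := by
  funext f
  show w.1 (S.compF g n hg f) = w.1 f
  apply eq_of_forall_dist_le
  intro ε hε
  obtain ⟨B, hBb, hB⟩ := f.2.2 ε hε (mball d n) (S.mball_mem n)
  have hBfin : B.Finite := S.finite_of_bounded hBb
  -- w.1 lies in the closure of δ(X \ B)
  have hw1 : w.1 ∈ closure (deltaMap 𝓔 ℝ '' Bᶜ) := by
    have hsplit : range (deltaMap 𝓔 ℝ) = deltaMap 𝓔 ℝ '' Bᶜ ∪ deltaMap 𝓔 ℝ '' B := by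
      rw [← image_union, compl_union_self, image_univ]
    have hw2 : w.1 ∈ closure (deltaMap 𝓔 ℝ '' Bᶜ) ∪ deltaMap 𝓔 ℝ '' B := by
      have hthis : w.1 ∈ closure (range (deltaMap 𝓔 ℝ)) := w.2
      rw [hsplit, closure_union, (hBfin.image _).isClosed.closure_eq] at hthis
      exact hthis
    rcases hw2 with h | h
    · exact h
    · obtain ⟨b, _, hb⟩ := h
      exact absurd ⟨b, Subtype.ext hb⟩ hw
  have hC : IsClosed {v : ↥(soSet 𝓔 ℝ) → ℝ | dist (v (S.compF g n hg f)) (v f) ≤ ε} :=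
    isClosed_le ((continuous_apply _).dist (continuous_apply _)) continuous_const
  have hsub : deltaMap 𝓔 ℝ '' Bᶜ ⊆
      {v : ↥(soSet 𝓔 ℝ) → ℝ | dist (v (S.compF g n hg f)) (v f) ≤ ε} := by
    rintro _ ⟨x, hx, rfl⟩
    have hd := hB x hx
    have h1 : g x ∈ entBall (mball d n) x := by rw [mem_mball_ball]; exact hg x
    have h2 : x ∈ entBall (mball d n) x := by
      rw [mem_mball_ball, S.hm.refl]; exact Nat.cast_nonneg n
    have h3 : edist (f.1 (g x)) (f.1 x) ≤ EMetric.diam (f.1 '' entBall (mball d n) x) :=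
      EMetric.edist_le_diam_of_mem ⟨g x, h1, rfl⟩ ⟨x, h2, rfl⟩
    have h4 : ENNReal.ofReal (dist (f.1 (g x)) (f.1 x)) < ENNReal.ofReal ε := by
      rw [← edist_dist]; exact lt_of_le_of_lt h3 hd
    exact le_of_lt ((ENNReal.ofReal_lt_ofReal_iff_of_nonneg dist_nonneg).mp h4)
  exact closure_minimal hsub hC hw1

/-- A permutation of bounded displacement belongs to the permutation group of the
Higson compactification. -/
theorem perm_mem (g : Equiv.Perm X) (n : ℕ) (hg : ∀ x, d x (g x) ≤ (n : ℝ)) :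
    g ∈ hPermGroup 𝓔 ℝ := by
  have hg' : ∀ x, d x (g.symm x) ≤ (n : ℝ) := by
    intro x
    have := hg (g.symm x)
    rw [Equiv.apply_symm_apply] at this
    rw [S.hm.symm]; exact this
  let e1 : HComp 𝓔 ℝ → HComp 𝓔 ℝ := fun w => ⟨S.Phi g n hg w.1, S.Phi_maps w.2⟩
  let e2 : HComp 𝓔 ℝ → HComp 𝓔 ℝ := fun w => ⟨S.Phi g.symm n hg' w.1, S.Phi_maps w.2⟩
  have hc1 : Continuous e1 := ((S.Phi_cont g n hg).comp continuous_subtype_val).subtype_mk _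
  have hc2 : Continuous e2 := ((S.Phi_cont g.symm n hg').comp continuous_subtype_val).subtype_mk _
  have he1 : ∀ x : X, e1 (deltaEmb 𝓔 ℝ x) = deltaEmb 𝓔 ℝ (g x) := fun x => Subtype.ext rfl
  have he2 : ∀ x : X, e2 (deltaEmb 𝓔 ℝ x) = deltaEmb 𝓔 ℝ (g.symm x) := fun x => Subtype.ext rfl
  have h21 : e2 ∘ e1 = id := by
    refine Continuous.ext_on (dense_deltaEmb 𝓔) (hc2.comp hc1) continuous_id ?_
    rintro _ ⟨x, rfl⟩
    simp only [Function.comp_apply, id_eq, he1, he2, Equiv.symm_apply_apply]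
  have h12 : e1 ∘ e2 = id := by
    refine Continuous.ext_on (dense_deltaEmb 𝓔) (hc1.comp hc2) continuous_id ?_
    rintro _ ⟨x, rfl⟩
    simp only [Function.comp_apply, id_eq, he1, he2, Equiv.apply_symm_apply]
  refine ⟨⟨⟨e1, e2, fun w => congrFun h21 w, fun w => congrFun h12 w⟩, hc1, hc2⟩, ?_, ?_⟩
  · intro z hz
    exact Subtype.ext (S.Phi_fixes z hz)
  · exact he1

end Setup
end Statement3Aux
namespace Statement3Aux
namespace Setup
open Set
open scoped Classical
variable {X : Type u} {𝓔 : Set (Set (X × X))} {d : X → X → ℝ} (S : Setup 𝓔 d)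
include S

theorem indicator_mem (y : X) : (fun t => if t = y then (1 : ℝ) else 0) ∈ soSet 𝓔 ℝ := by
  constructor
  · refine ((Set.finite_singleton (0:ℝ)).insert 1).isBounded.subset ?_
    rintro _ ⟨x, rfl⟩
    by_cases h : x = y <;> simp [h]
  · intro ε hε E hE
    obtain ⟨n, hn⟩ := S.subset_mball hE
    refine ⟨entBall (mball d n) y, ⟨mball d n, S.mball_mem n, y, subset_rfl⟩, fun x hx => ?_⟩
    have himg : (fun t => if t = y then (1 : ℝ) else 0) '' entBall E x ⊆ {0} := by
      rintro _ ⟨t, ht, rfl⟩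
      have hty : t ≠ y := by
        rintro rfl
        exact hx (by rw [mem_mball_ball, S.hm.symm]; exact hn ht)
      simp [hty]
    calc EMetric.diam ((fun t => if t = y then (1 : ℝ) else 0) '' entBall E x)
        ≤ EMetric.diam ({0} : Set ℝ) := EMetric.diam_mono himg
      _ = 0 := EMetric.diam_singleton
      _ < ENNReal.ofReal ε := ENNReal.ofReal_pos.mpr hε

end Setup
end Statement3Aux
namespace Statement3Aux
namespace Setup
open Set Filter
open scoped Classical
variable {X : Type u} {𝓔 : Set (Set (X × X))} {d : X → X → ℝ} (S : Setup 𝓔 d)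
include S

theorem displacement_bounded (g : Equiv.Perm X) (hg : g ∈ hPermGroup 𝓔 ℝ) :
    ∃ n : ℕ, ∀ x, d x (g x) ≤ (n : ℝ) := by
  by_contra hcon
  push_neg at hcon
  -- step 1: choice of points far from a finite list and with large displacement
  have pick : ∀ l : List X, ∃ x : X, ((l.length : ℝ) + 1 < d x (g x)) ∧
      ∀ p ∈ l, ((l.length : ℝ) + 1 < d x p ∧ (l.length : ℝ) + 1 < d (g x) p) := by
    intro l
    set L : ℕ := l.length + 1 with hL
    have hBadfin : {x : X | ∃ p ∈ l, d x p ≤ (L : ℝ) ∨ d (g x) p ≤ (L : ℝ)}.Finite := by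
      refine Set.Finite.subset (Set.Finite.biUnion l.finite_toSet
        (fun p _ => (S.mball_ball_finite L p).union
          ((S.mball_ball_finite L p).preimage (Set.injOn_of_injective g.injective)))) ?_
      rintro x ⟨p, hp, hcase⟩
      refine Set.mem_biUnion hp ?_
      rcases hcase with h | h
      · exact Or.inl (by rw [mem_mball_ball, S.hm.symm]; exact h)
      · exact Or.inr (by rw [Set.mem_preimage, mem_mball_ball, S.hm.symm]; exact h)
    obtain ⟨x, hx⟩ := hcon (hBadfin.toFinset.sup (fun y => ⌈d y (g y)⌉₊) ⊔ L)
    have hxNot : x ∉ {x : X | ∃ p ∈ l, d x p ≤ (L : ℝ) ∨ d (g x) p ≤ (L : ℝ)} := by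
      intro hxB
      have h2 : ⌈d x (g x)⌉₊ ≤ hBadfin.toFinset.sup (fun y => ⌈d y (g y)⌉₊) ⊔ L :=
        le_trans (Finset.le_sup (f := fun y => ⌈d y (g y)⌉₊)
          (hBadfin.mem_toFinset.mpr hxB)) le_sup_left
      have h3 := (Nat.cast_le (α := ℝ)).mpr h2
      linarith [Nat.le_ceil (d x (g x)), hx]
    have hLle : ((l.length : ℝ) + 1) ≤ ((hBadfin.toFinset.sup (fun y => ⌈d y (g y)⌉₊) ⊔ L : ℕ) : ℝ) := by
      have h4 := (Nat.cast_le (α := ℝ)).mpr (le_sup_right (a := hBadfin.toFinset.sup (fun y => ⌈d y (g y)⌉₊)) (b := L))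
      have h5 : (L : ℝ) = (l.length : ℝ) + 1 := by rw [hL]; push_cast; ring
      linarith
    refine ⟨x, by linarith [hx], fun p hp => ?_⟩
    have h1 : ¬(d x p ≤ (L : ℝ) ∨ d (g x) p ≤ (L : ℝ)) := fun h => hxNot ⟨p, hp, h⟩
    push_neg at h1
    have hLcast : ((l.length : ℝ) + 1) = (L : ℝ) := by rw [hL]; push_cast; ring
    rw [hLcast]
    exact ⟨h1.1, h1.2⟩
  choose c hc1 hc2 using pick
  -- step 2: the sequence
  let LL : ℕ → List X := fun k => Nat.rec [] (fun _ l => c l :: g (c l) :: l) k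
  let xs : ℕ → X := fun k => c (LL k)
  have hLsucc : ∀ k, LL (k + 1) = xs k :: g (xs k) :: LL k := fun k => rfl
  have hlen : ∀ k, (LL k).length = 2 * k := by
    intro k; induction k with
    | zero => rfl
    | succ k ih => rw [hLsucc, List.length_cons, List.length_cons, ih]; ring
  have hmem : ∀ i k, i < k → xs i ∈ LL k ∧ g (xs i) ∈ LL k := by
    intro i k hik
    induction k with
    | zero => omega
    | succ k ih =>
      rw [hLsucc]
      rcases Nat.lt_succ_iff_lt_or_eq.mp hik with h | h
      · exact ⟨List.mem_cons_of_mem _ (List.mem_cons_of_mem _ (ih h).1),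
          List.mem_cons_of_mem _ (List.mem_cons_of_mem _ (ih h).2)⟩
      · subst h; exact ⟨List.mem_cons_self, List.mem_cons_of_mem _ List.mem_cons_self⟩
  -- step 3: separation
  have key : ∀ i j : ℕ, (2 * (max i j) : ℝ) + 1 < d (xs i) (g (xs j)) := by
    intro i j
    rcases lt_trichotomy i j with h | h | h
    · have h2 := (hc2 (LL j) (xs i) (hmem i j h).1).2
      rw [hlen] at h2
      rw [max_eq_right h.le, S.hm.symm]
      exact_mod_cast h2
    · subst h
      have h1 := hc1 (LL i)
      rw [hlen] at h1
      rw [max_self]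
      exact_mod_cast h1
    · have h2 := (hc2 (LL i) (g (xs j)) (hmem j i h).2).1
      rw [hlen] at h2
      rw [max_eq_left h.le]
      exact_mod_cast h2
  have keyA : ∀ i j : ℕ, i ≠ j → (2 * (max i j) : ℝ) + 1 < d (xs i) (xs j) := by
    intro i j hij
    rcases lt_or_gt_of_ne hij with h | h
    · have h2 := (hc2 (LL j) (xs i) (hmem i j h).1).1
      rw [hlen] at h2
      rw [max_eq_right h.le, S.hm.symm]
      exact_mod_cast h2
    · have h2 := (hc2 (LL i) (xs j) (hmem j i h).1).1
      rw [hlen] at h2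
      rw [max_eq_left h.le]
      exact_mod_cast h2
  have hxsinj : Function.Injective xs := by
    intro i j hij
    by_contra hne
    have := keyA i j hne
    rw [hij, S.hm.refl] at this
    have : (0 : ℝ) ≤ 2 * (max i j : ℝ) := by positivity
    linarith [keyA i j hne, S.hm.refl (xs j)]
  haveI : Nonempty X := ⟨xs 0⟩
  -- step 4: the slowly oscillating Urysohn function
  set DA : X → ℝ := fun x => sInf (range fun i => d x (xs i)) with hDAdef
  set DB : X → ℝ := fun x => sInf (range fun i => d x (g (xs i))) with hDBdef
  have hDAeq : ∀ x, DA x = sInf (range fun i => d x (xs i)) := fun _ => rfl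
  have hDBeq : ∀ x, DB x = sInf (range fun i => d x (g (xs i))) := fun _ => rfl
  have hbddA : ∀ x, BddBelow (range fun i => d x (xs i)) := by
    intro x; exact ⟨0, by rintro _ ⟨i, rfl⟩; exact S.d_nonneg _ _⟩
  have hbddB : ∀ x, BddBelow (range fun i => d x (g (xs i))) := by
    intro x; exact ⟨0, by rintro _ ⟨i, rfl⟩; exact S.d_nonneg _ _⟩
  have hDAnn : ∀ x, 0 ≤ DA x := fun x =>
    le_csInf (range_nonempty _) (by rintro _ ⟨i, rfl⟩; exact S.d_nonneg _ _)
  have hDBnn : ∀ x, 0 ≤ DB x := fun x =>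
    le_csInf (range_nonempty _) (by rintro _ ⟨i, rfl⟩; exact S.d_nonneg _ _)
  have hDAle : ∀ x i, DA x ≤ d x (xs i) := fun x i => csInf_le (hbddA x) (mem_range_self i)
  have hDBle : ∀ x i, DB x ≤ d x (g (xs i)) := fun x i => csInf_le (hbddB x) (mem_range_self i)
  have hDAlip : ∀ x y, DA x ≤ d x y + DA y := by
    intro x y
    have h : DA x - d x y ≤ DA y := by
      rw [hDAeq]
      refine le_csInf (range_nonempty _) ?_
      rintro _ ⟨i, rfl⟩
      have h1 := hDAle x i
      have ht := S.hm.triangle x y (xs i)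
      linarith
    linarith
  have hDBlip : ∀ x y, DB x ≤ d x y + DB y := by
    intro x y
    have h : DB x - d x y ≤ DB y := by
      rw [hDBeq]
      refine le_csInf (range_nonempty _) ?_
      rintro _ ⟨i, rfl⟩
      have h1 := hDBle x i
      have ht := S.hm.triangle x y (g (xs i))
      linarith
    linarith
  have hDA0 : ∀ k, DA (xs k) = 0 := by
    intro k
    refine le_antisymm ?_ (hDAnn _)
    have h1 := hDAle (xs k) k
    rw [S.hm.refl] at h1
    exact h1
  have hDB0 : ∀ k, DB (g (xs k)) = 0 := by
    intro k
    refine le_antisymm ?_ (hDBnn _)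
    have h1 := hDBle (g (xs k)) k
    rw [S.hm.refl] at h1
    exact h1
  have hDB1 : ∀ k, 1 ≤ DB (xs k) := by
    intro k
    rw [hDBeq]
    refine le_csInf (range_nonempty _) ?_
    rintro _ ⟨i, rfl⟩
    have h1 := key k i
    have h0 : (0:ℝ) ≤ 2 * ((max k i : ℕ) : ℝ) := by positivity
    linarith
  have hDA1 : ∀ k, 1 ≤ DA (g (xs k)) := by
    intro k
    rw [hDAeq]
    refine le_csInf (range_nonempty _) ?_
    rintro _ ⟨i, rfl⟩
    have h1 := key i k
    have h0 : (0:ℝ) ≤ 2 * ((max i k : ℕ) : ℝ) := by positivity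
    have hsym : d (g (xs k)) (xs i) = d (xs i) (g (xs k)) := S.hm.symm _ _
    linarith
  have hone : ∀ x, 1 ≤ DA x + DB x := by
    intro x
    by_contra hlt
    push_neg at hlt
    have hε0pos : 0 < (1 - DA x - DB x) / 2 := by linarith
    have hA1 : sInf (range fun i => d x (xs i)) < DA x + (1 - DA x - DB x) / 2 := by
      rw [← hDAeq]; linarith
    have hB1 : sInf (range fun i => d x (g (xs i))) < DB x + (1 - DA x - DB x) / 2 := by
      rw [← hDBeq]; linarith
    obtain ⟨a, ⟨i, rfl⟩, hai⟩ := exists_lt_of_csInf_lt (range_nonempty _) hA1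
    obtain ⟨b, ⟨j, rfl⟩, hbj⟩ := exists_lt_of_csInf_lt (range_nonempty _) hB1
    have htri := S.hm.triangle (xs i) x (g (xs j))
    have hsym : d (xs i) x = d x (xs i) := S.hm.symm _ _
    have hk := key i j
    have h0 : (0:ℝ) ≤ 2 * ((max i j : ℕ) : ℝ) := by positivity
    linarith
  have hpos : ∀ x, 0 < DA x + DB x := fun x => lt_of_lt_of_le one_pos (hone x)
  set φ : X → ℝ := fun x => DA x / (DA x + DB x) with hφdef
  have hφ0 : ∀ k, φ (xs k) = 0 := by
    intro k
    show DA (xs k) / (DA (xs k) + DB (xs k)) = 0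
    rw [hDA0 k, zero_div]
  have hφ1 : ∀ k, φ (g (xs k)) = 1 := by
    intro k
    show DA (g (xs k)) / (DA (g (xs k)) + DB (g (xs k))) = 1
    rw [hDB0 k, add_zero, div_self (by linarith [hDA1 k])]
  have hφmem : ∀ x, φ x ∈ Set.Icc (0:ℝ) 1 := by
    intro x
    refine ⟨div_nonneg (hDAnn x) (hpos x).le, ?_⟩
    rw [div_le_one (hpos x)]
    linarith [hDBnn x]
  have hbnd : ∀ x y, |φ x - φ y| ≤ d x y / (DA y + DB y) := by
    intro x y
    have hxp := hpos x
    have hyp := hpos y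
    have hnum : φ x - φ y =
        (DA x * DB y - DA y * DB x) / ((DA x + DB x) * (DA y + DB y)) := by
      show DA x / (DA x + DB x) - DA y / (DA y + DB y) = _
      field_simp
      ring
    have h1 : |DB y - DB x| ≤ d x y := by
      rw [abs_sub_le_iff]
      have hl1 := hDBlip y x
      have hl2 := hDBlip x y
      have hs : d y x = d x y := S.hm.symm _ _
      constructor <;> linarith
    have h2 : |DA x - DA y| ≤ d x y := by
      rw [abs_sub_le_iff]
      have hl1 := hDAlip x y
      have hl2 := hDAlip y x
      have hs : d y x = d x y := S.hm.symm _ _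
      constructor <;> linarith
    have habs : |DA x * DB y - DA y * DB x| ≤ (DA x + DB x) * d x y := by
      calc |DA x * DB y - DA y * DB x|
          = |DA x * (DB y - DB x) + DB x * (DA x - DA y)| := by ring_nf
        _ ≤ |DA x * (DB y - DB x)| + |DB x * (DA x - DA y)| := abs_add_le _ _
        _ = DA x * |DB y - DB x| + DB x * |DA x - DA y| := by
            rw [abs_mul, abs_mul, abs_of_nonneg (hDAnn x), abs_of_nonneg (hDBnn x)]
        _ ≤ DA x * d x y + DB x * d x y :=
            add_le_add (mul_le_mul_of_nonneg_left h1 (hDAnn x))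
              (mul_le_mul_of_nonneg_left h2 (hDBnn x))
        _ = (DA x + DB x) * d x y := by ring
    rw [hnum, abs_div, abs_of_pos (mul_pos hxp hyp)]
    calc |DA x * DB y - DA y * DB x| / ((DA x + DB x) * (DA y + DB y))
        ≤ ((DA x + DB x) * d x y) / ((DA x + DB x) * (DA y + DB y)) :=
          (div_le_div_iff_of_pos_right (mul_pos hxp hyp)).mpr habs
      _ = d x y / (DA y + DB y) := mul_div_mul_left _ _ (ne_of_gt hxp)
  have hSR : ∀ R : ℝ, 0 ≤ R → {x | DA x + DB x ≤ R}.Finite := by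
    intro R hR
    refine Set.Finite.subset (Set.Finite.biUnion (Set.finite_Iio (⌈2*R+2⌉₊ + 1))
      (fun i _ => S.mball_ball_finite ⌈2*R+2⌉₊ (xs i))) ?_
    intro x hx
    have hxmem : DA x + DB x ≤ R := hx
    have hA1 : sInf (range fun i => d x (xs i)) < R + 1 := by
      rw [← hDAeq]; linarith [hDBnn x]
    have hB1 : sInf (range fun i => d x (g (xs i))) < R + 1 := by
      rw [← hDBeq]; linarith [hDAnn x]
    obtain ⟨a, ⟨i, rfl⟩, hai⟩ := exists_lt_of_csInf_lt (range_nonempty _) hA1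
    obtain ⟨b, ⟨j, rfl⟩, hbj⟩ := exists_lt_of_csInf_lt (range_nonempty _) hB1
    have htri := S.hm.triangle (xs i) x (g (xs j))
    have hsym : d (xs i) x = d x (xs i) := S.hm.symm _ _
    have hk := key i j
    have hceil : (2*R+2 : ℝ) ≤ (⌈2*R+2⌉₊ : ℝ) := Nat.le_ceil _
    have hicast : ((i : ℕ) : ℝ) ≤ ((max i j : ℕ) : ℝ) := Nat.cast_le.mpr (le_max_left i j)
    have hilt : ((i : ℕ) : ℝ) < (⌈2*R+2⌉₊ : ℝ) := by linarith
    have hiltn : i < ⌈2*R+2⌉₊ + 1 := by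
      have := Nat.cast_lt (α := ℝ).mp hilt
      omega
    refine Set.mem_biUnion (Set.mem_Iio.mpr hiltn) ?_
    rw [mem_mball_ball, S.hm.symm]
    linarith
  have hφso : φ ∈ soSet 𝓔 ℝ := by
    constructor
    · exact (Metric.isBounded_Icc (0:ℝ) 1).subset (by rintro _ ⟨x, rfl⟩; exact hφmem x)
    · intro ε hε E hE
      obtain ⟨n, hn⟩ := S.subset_mball hE
      have hRpos : (0:ℝ) < 2*(n:ℝ)/ε + 1 := by positivity
      refine ⟨{x | DA x + DB x ≤ 2*(n:ℝ)/ε + 1},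
        S.bounded_of_finite (hSR _ hRpos.le), fun x hx => ?_⟩
      have hxR : 2*(n:ℝ)/ε + 1 < DA x + DB x := not_le.mp hx
      have hc : 2*(n:ℝ)/(2*(n:ℝ)/ε + 1) < ε := by
        rw [div_lt_iff₀ hRpos]
        have hcancel : ε * (2*(n:ℝ)/ε) = 2*(n:ℝ) := by
          field_simp
        nlinarith [hcancel]
      refine lt_of_le_of_lt (EMetric.diam_le ?_) ((ENNReal.ofReal_lt_ofReal_iff hε).mpr hc)
      rintro _ ⟨y, hy, rfl⟩ _ ⟨y', hy', rfl⟩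
      rw [edist_dist]
      refine ENNReal.ofReal_le_ofReal ?_
      have hdy : d y x ≤ (n:ℝ) := by rw [S.hm.symm]; exact hn hy
      have hdy' : d y' x ≤ (n:ℝ) := by rw [S.hm.symm]; exact hn hy'
      have hb1 : |φ y - φ x| ≤ (n:ℝ) / (DA x + DB x) :=
        le_trans (hbnd y x) ((div_le_div_iff_of_pos_right (hpos x)).mpr hdy)
      have hb2 : |φ y' - φ x| ≤ (n:ℝ) / (DA x + DB x) :=
        le_trans (hbnd y' x) ((div_le_div_iff_of_pos_right (hpos x)).mpr hdy')
      have hfrac : (n:ℝ) / (DA x + DB x) ≤ (n:ℝ) / (2*(n:ℝ)/ε + 1) := by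
        gcongr
      have h2R : 2*(n:ℝ)/(2*(n:ℝ)/ε + 1) =
          (n:ℝ)/(2*(n:ℝ)/ε + 1) + (n:ℝ)/(2*(n:ℝ)/ε + 1) := by ring
      rw [Real.dist_eq]
      have htriabs := abs_sub_le (φ y) (φ x) (φ y')
      have hcomm : |φ x - φ y'| = |φ y' - φ x| := abs_sub_comm _ _
      linarith
  -- step 5: contradiction via the Higson compactification
  obtain ⟨h, hfix, hδ⟩ := hg
  haveI : CompactSpace (HComp 𝓔 ℝ) := isCompact_iff_compactSpace.mp (isCompact_hCompSet 𝓔)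
  set u : ℕ → HComp 𝓔 ℝ := fun k => deltaEmb 𝓔 ℝ (xs k) with hu
  haveI hne : (Filter.map u atTop).NeBot := Filter.map_neBot
  obtain ⟨z, hz⟩ := exists_clusterPt_of_compactSpace (Filter.map u atTop)
  have hfreq : ∀ U : Set (HComp 𝓔 ℝ), U ∈ 𝓝 z → ∀ N : ℕ, ∃ k, N ≤ k ∧ u k ∈ U := by
    intro U hU N
    have hV : u '' Set.Ici N ∈ Filter.map u atTop :=
      Filter.mem_map.mpr (Filter.mem_of_superset (Filter.Ici_mem_atTop N)
        (Set.subset_preimage_image u _))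
    obtain ⟨w, hwU, k, hk, rfl⟩ := clusterPt_iff_nonempty.mp hz hU hV
    exact ⟨k, hk, hwU⟩
  have hznot : z ∉ range (deltaEmb 𝓔 ℝ) := by
    rintro ⟨y, rfl⟩
    have hcont : Continuous fun w : HComp 𝓔 ℝ =>
        w.1 ⟨fun t => if t = y then (1:ℝ) else 0, S.indicator_mem y⟩ :=
      (continuous_apply _).comp continuous_subtype_val
    have hUopen : IsOpen {w : HComp 𝓔 ℝ |
        1/2 < w.1 ⟨fun t => if t = y then (1:ℝ) else 0, S.indicator_mem y⟩} :=
      isOpen_lt continuous_const hcont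
    have hzU : deltaEmb 𝓔 ℝ y ∈ {w : HComp 𝓔 ℝ |
        1/2 < w.1 ⟨fun t => if t = y then (1:ℝ) else 0, S.indicator_mem y⟩} := by
      show (1:ℝ)/2 < (if y = y then (1:ℝ) else 0)
      rw [if_pos rfl]
      norm_num
    have he : ∀ k, u k ∈ {w : HComp 𝓔 ℝ |
        1/2 < w.1 ⟨fun t => if t = y then (1:ℝ) else 0, S.indicator_mem y⟩} → xs k = y := by
      intro k hk
      by_contra hne'
      have hval : (u k).1 ⟨fun t => if t = y then (1:ℝ) else 0, S.indicator_mem y⟩ = 0 := by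
        show (if xs k = y then (1:ℝ) else 0) = 0
        simp [hne']
      rw [Set.mem_setOf_eq, hval] at hk
      norm_num at hk
    obtain ⟨k1, -, hk1⟩ := hfreq _ (hUopen.mem_nhds hzU) 0
    obtain ⟨k2, hk2, hk2U⟩ := hfreq _ (hUopen.mem_nhds hzU) (k1+1)
    have := hxsinj ((he k1 hk1).trans (he k2 hk2U).symm)
    omega
  have hzz : h z = z := hfix z hznot
  have hev : Continuous fun w : HComp 𝓔 ℝ => w.1 ⟨φ, hφso⟩ :=
    (continuous_apply _).comp continuous_subtype_val
  have hz0 : z.1 ⟨φ, hφso⟩ = 0 := by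
    apply eq_of_forall_dist_le
    intro ε hε
    have hU : {w : HComp 𝓔 ℝ | dist (w.1 ⟨φ, hφso⟩) (z.1 ⟨φ, hφso⟩) < ε} ∈ 𝓝 z := by
      have hop : IsOpen {w : HComp 𝓔 ℝ | dist (w.1 ⟨φ, hφso⟩) (z.1 ⟨φ, hφso⟩) < ε} :=
        isOpen_lt (hev.dist continuous_const) continuous_const
      exact hop.mem_nhds (by simp [dist_self, hε])
    obtain ⟨k, -, hk⟩ := hfreq _ hU 0
    have huk : (u k).1 ⟨φ, hφso⟩ = 0 := hφ0 k
    rw [Set.mem_setOf_eq, huk] at hk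
    rw [dist_comm] at hk
    exact hk.le
  have hz1 : z.1 ⟨φ, hφso⟩ = 1 := by
    apply eq_of_forall_dist_le
    intro ε hε
    have hop : IsOpen {w : HComp 𝓔 ℝ | dist (w.1 ⟨φ, hφso⟩) ((h z).1 ⟨φ, hφso⟩) < ε} :=
      isOpen_lt (hev.dist continuous_const) continuous_const
    have hW : {w : HComp 𝓔 ℝ | dist (w.1 ⟨φ, hφso⟩) ((h z).1 ⟨φ, hφso⟩) < ε} ∈ 𝓝 (h z) :=
      hop.mem_nhds (by simp [dist_self, hε])
    have hW' : h ⁻¹' {w : HComp 𝓔 ℝ |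
        dist (w.1 ⟨φ, hφso⟩) ((h z).1 ⟨φ, hφso⟩) < ε} ∈ 𝓝 z :=
      h.continuous.continuousAt hW
    obtain ⟨k, -, hk⟩ := hfreq _ hW' 0
    have hhuk : h (u k) = deltaEmb 𝓔 ℝ (g (xs k)) := hδ (xs k)
    have hval : (h (u k)).1 ⟨φ, hφso⟩ = 1 := by rw [hhuk]; exact hφ1 k
    have hk2 : dist ((h (u k)).1 ⟨φ, hφso⟩) ((h z).1 ⟨φ, hφso⟩) < ε := hk
    rw [hval, hzz] at hk2
    rw [dist_comm] at hk2
    exact hk2.le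
  rw [hz0] at hz1
  exact one_ne_zero hz1.symm

end Setup
end Statement3Aux
namespace Statement3Aux
namespace Setup
open Set Filter
open scoped Classical
variable {X : Type u} {𝓔 : Set (Set (X × X))} {d : X → X → ℝ} (S : Setup 𝓔 d)
include S

theorem mem_permCoarse {E : Set (X × X)} (hE : E ∈ 𝓔) : E ∈ permCoarse (hPermGroup 𝓔 ℝ) := by
  obtain ⟨hent, n, hn⟩ := S.mem_iff.mp hE
  obtain ⟨m, hm⟩ := S.hfin (mball d n) (S.mball_mem n)
  set K := 2 * m + 1 with hK
  set 𝒞 : Set (Set ((X × X) × ℕ)) :=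
    {c | (∀ q ∈ c, q.1 ∈ mball d n ∧ q.1.1 ≠ q.1.2 ∧ q.2 < K) ∧
      (∀ x y i, ((x, y), i) ∈ c → ((y, x), i) ∈ c) ∧
      (∀ x y i j, ((x, y), i) ∈ c → ((x, y), j) ∈ c → i = j) ∧
      (∀ x y z i, ((x, y), i) ∈ c → ((x, z), i) ∈ c → y = z)} with h𝒞
  have hchain : ∀ ch ⊆ 𝒞, IsChain (· ⊆ ·) ch → ch.Nonempty → ∃ ub ∈ 𝒞, ∀ s ∈ ch, s ⊆ ub := by
    intro ch hch hchn _
    refine ⟨⋃₀ ch, ⟨?_, ?_, ?_, ?_⟩, fun s hs => subset_sUnion_of_mem hs⟩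
    · rintro q ⟨s, hs, hq⟩
      exact (hch hs).1 q hq
    · rintro x y i ⟨s, hs, hq⟩
      exact ⟨s, hs, (hch hs).2.1 x y i hq⟩
    · rintro x y i j ⟨s, hs, hq⟩ ⟨t, ht, hq'⟩
      rcases hchn.total hs ht with hst | hts
      · exact (hch ht).2.2.1 x y i j (hst hq) hq'
      · exact (hch hs).2.2.1 x y i j hq (hts hq')
    · rintro x y z i ⟨s, hs, hq⟩ ⟨t, ht, hq'⟩
      rcases hchn.total hs ht with hst | hts
      · exact (hch ht).2.2.2 x y z i (hst hq) hq'
      · exact (hch hs).2.2.2 x y z i hq (hts hq')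
  have hempty : (∅ : Set ((X × X) × ℕ)) ∈ 𝒞 := by
    refine ⟨?_, ?_, ?_, ?_⟩ <;> simp
  obtain ⟨M, -, hMmax⟩ := zorn_subset_nonempty 𝒞 hchain ∅ hempty
  obtain ⟨hM1, hM2, hM3, hM4⟩ := hMmax.1
  -- counting colors at a vertex
  have hIfin : ∀ v : X, {i : ℕ | ∃ w, ((v, w), i) ∈ M}.Finite ∧
      {i : ℕ | ∃ w, ((v, w), i) ∈ M}.ncard ≤ m := by
    intro v
    have hmaps : ∀ i ∈ {i : ℕ | ∃ w, ((v, w), i) ∈ M},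
        (if h : ∃ w, ((v, w), i) ∈ M then h.choose else v) ∈ entBall (mball d n) v := by
      intro i hi
      have hi' : ∃ w, ((v, w), i) ∈ M := hi
      rw [dif_pos hi']
      exact (hM1 _ hi'.choose_spec).1
    have hinj : Set.InjOn (fun i => if h : ∃ w, ((v, w), i) ∈ M then h.choose else v)
        {i : ℕ | ∃ w, ((v, w), i) ∈ M} := by
      intro i hi j hj hij
      have hi' : ∃ w, ((v, w), i) ∈ M := hi
      have hj' : ∃ w, ((v, w), j) ∈ M := hj
      have hij2 : (if h : ∃ w, ((v, w), i) ∈ M then h.choose else v) =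
          (if h : ∃ w, ((v, w), j) ∈ M then h.choose else v) := hij
      rw [dif_pos hi', dif_pos hj'] at hij2
      rename' hij2 => hij
      refine hM3 v hi'.choose i j hi'.choose_spec ?_
      rw [hij]
      exact hj'.choose_spec
    constructor
    · exact Set.Finite.of_finite_image
        ((S.mball_ball_finite n v).subset (by rintro _ ⟨i, hi, rfl⟩; exact hmaps i hi)) hinj
    · exact le_trans (Set.ncard_le_ncard_of_injOn _ hmaps hinj (S.mball_ball_finite n v))
        ((hm v).2)
  -- every edge of `mball d n` is colored
  have htotal : ∀ x y : X, (x, y) ∈ mball d n → x ≠ y → ∃ i, i < K ∧ ((x, y), i) ∈ M := by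
    intro x y hxy hxyne
    by_contra hno
    push_neg at hno
    have hnoM : ∀ i, ((x, y), i) ∉ M := by
      intro i hi
      exact hno i (hM1 _ hi).2.2 hi
    have hex : ∃ i, i < K ∧
        i ∉ ({i | ∃ w, ((x, w), i) ∈ M} ∪ {i | ∃ w, ((y, w), i) ∈ M}) := by
      by_contra hall
      push_neg at hall
      have hsub : (↑(Finset.range K) : Set ℕ) ⊆
          {i | ∃ w, ((x, w), i) ∈ M} ∪ {i | ∃ w, ((y, w), i) ∈ M} := by
        intro i hi
        exact hall i (Finset.mem_range.mp hi)
      have hcard := Set.ncard_le_ncard hsub (((hIfin x).1).union ((hIfin y).1))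
      rw [Set.ncard_coe_finset, Finset.card_range] at hcard
      have := Set.ncard_union_le {i | ∃ w, ((x, w), i) ∈ M} {i | ∃ w, ((y, w), i) ∈ M}
      have hx2 := (hIfin x).2
      have hy2 := (hIfin y).2
      omega
    obtain ⟨i, hiK, hiF⟩ := hex
    have hix : ∀ w, ((x, w), i) ∉ M := fun w hw => hiF (Or.inl ⟨w, hw⟩)
    have hiy : ∀ w, ((y, w), i) ∉ M := fun w hw => hiF (Or.inr ⟨w, hw⟩)
    have hymem : (y, x) ∈ mball d n := by
      show d y x ≤ (n : ℝ)
      rw [S.hm.symm]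
      exact hxy
    have hM'mem : M ∪ {((x, y), i), ((y, x), i)} ∈ 𝒞 := by
      refine ⟨?_, ?_, ?_, ?_⟩
      · rintro q (hq | hq | hq)
        · exact hM1 q hq
        · rw [hq]; exact ⟨hxy, hxyne, hiK⟩
        · rw [Set.mem_singleton_iff] at hq
          rw [hq]; exact ⟨hymem, hxyne.symm, hiK⟩
      · rintro a b j (hq | hq | hq)
        · exact Or.inl (hM2 a b j hq)
        · rw [Prod.mk.injEq, Prod.mk.injEq] at hq
          obtain ⟨⟨ha, hb⟩, hj⟩ := hq
          subst ha; subst hb; subst hj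
          exact Or.inr (Or.inr rfl)
        · rw [Set.mem_singleton_iff, Prod.mk.injEq, Prod.mk.injEq] at hq
          obtain ⟨⟨ha, hb⟩, hj⟩ := hq
          subst ha; subst hb; subst hj
          exact Or.inr (Or.inl rfl)
      · rintro a b j j' (hq | hq | hq) (hq' | hq' | hq')
        · exact hM3 a b j j' hq hq'
        · rw [Prod.mk.injEq, Prod.mk.injEq] at hq'
          obtain ⟨⟨ha, hb⟩, hj⟩ := hq'
          subst ha; subst hb
          exact absurd hq (hnoM j)
        · rw [Set.mem_singleton_iff, Prod.mk.injEq, Prod.mk.injEq] at hq'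
          obtain ⟨⟨ha, hb⟩, hj⟩ := hq'
          subst ha; subst hb
          exact absurd (hM2 _ _ _ hq) (hnoM j)
        · rw [Prod.mk.injEq, Prod.mk.injEq] at hq
          obtain ⟨⟨ha, hb⟩, hj⟩ := hq
          subst ha; subst hb
          exact absurd hq' (hnoM j')
        · rw [Prod.mk.injEq, Prod.mk.injEq] at hq
          rw [Prod.mk.injEq, Prod.mk.injEq] at hq'
          exact hq.2.trans hq'.2.symm
        · rw [Prod.mk.injEq, Prod.mk.injEq] at hq
          rw [Set.mem_singleton_iff, Prod.mk.injEq, Prod.mk.injEq] at hq'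
          exact absurd (hq.1.1.symm.trans hq'.1.1) hxyne
        · rw [Set.mem_singleton_iff, Prod.mk.injEq, Prod.mk.injEq] at hq
          obtain ⟨⟨ha, hb⟩, hj⟩ := hq
          subst ha; subst hb
          exact absurd (hM2 _ _ _ hq') (hnoM j')
        · rw [Set.mem_singleton_iff, Prod.mk.injEq, Prod.mk.injEq] at hq
          rw [Prod.mk.injEq, Prod.mk.injEq] at hq'
          exact absurd (hq.1.1.symm.trans hq'.1.1) (Ne.symm hxyne)
        · rw [Set.mem_singleton_iff, Prod.mk.injEq, Prod.mk.injEq] at hq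
          rw [Set.mem_singleton_iff, Prod.mk.injEq, Prod.mk.injEq] at hq'
          exact hq.2.trans hq'.2.symm
      · rintro a b cc j (hq | hq | hq) (hq' | hq' | hq')
        · exact hM4 a b cc j hq hq'
        · rw [Prod.mk.injEq, Prod.mk.injEq] at hq'
          obtain ⟨⟨ha, hc⟩, hj⟩ := hq'
          subst ha; subst hj
          exact absurd hq (hix b)
        · rw [Set.mem_singleton_iff, Prod.mk.injEq, Prod.mk.injEq] at hq'
          obtain ⟨⟨ha, hc⟩, hj⟩ := hq'
          subst ha; subst hj
          exact absurd hq (hiy b)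
        · rw [Prod.mk.injEq, Prod.mk.injEq] at hq
          obtain ⟨⟨ha, hb⟩, hj⟩ := hq
          subst ha; subst hj
          exact absurd hq' (hix cc)
        · rw [Prod.mk.injEq, Prod.mk.injEq] at hq
          rw [Prod.mk.injEq, Prod.mk.injEq] at hq'
          exact hq.1.2.trans hq'.1.2.symm
        · rw [Prod.mk.injEq, Prod.mk.injEq] at hq
          rw [Set.mem_singleton_iff, Prod.mk.injEq, Prod.mk.injEq] at hq'
          exact absurd (hq.1.1.symm.trans hq'.1.1) hxyne
        · rw [Set.mem_singleton_iff, Prod.mk.injEq, Prod.mk.injEq] at hq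
          obtain ⟨⟨ha, hb⟩, hj⟩ := hq
          subst ha; subst hj
          exact absurd hq' (hiy cc)
        · rw [Set.mem_singleton_iff, Prod.mk.injEq, Prod.mk.injEq] at hq
          rw [Prod.mk.injEq, Prod.mk.injEq] at hq'
          exact absurd (hq.1.1.symm.trans hq'.1.1) (Ne.symm hxyne)
        · rw [Set.mem_singleton_iff, Prod.mk.injEq, Prod.mk.injEq] at hq
          rw [Set.mem_singleton_iff, Prod.mk.injEq, Prod.mk.injEq] at hq'
          exact hq.1.2.trans hq'.1.2.symm
    have hsubM : M ∪ {((x, y), i), ((y, x), i)} ⊆ M :=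
      hMmax.2 hM'mem Set.subset_union_left
    exact hnoM i (hsubM (Or.inr (Or.inl rfl)))
  -- the involutions
  have hσspec : ∀ (i : ℕ) (x : X) (hx : ∃ w, ((x, w), i) ∈ M),
      ((x, if h : ∃ w, ((x, w), i) ∈ M then h.choose else x), i) ∈ M := by
    intro i x hx
    rw [dif_pos hx]
    exact hx.choose_spec
  set σ : ℕ → X → X := fun i x => if h : ∃ w, ((x, w), i) ∈ M then h.choose else x with hσ
  have hσinv : ∀ i, Function.Involutive (σ i) := by
    intro i x
    by_cases hx : ∃ w, ((x, w), i) ∈ M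
    · have h1 : ((x, σ i x), i) ∈ M := hσspec i x hx
      have h2 : ((σ i x, x), i) ∈ M := hM2 _ _ _ h1
      have h3 : ∃ w, ((σ i x, w), i) ∈ M := ⟨x, h2⟩
      have h4 : ((σ i x, σ i (σ i x)), i) ∈ M := hσspec i (σ i x) h3
      exact hM4 _ _ _ _ h4 h2
    · show σ i (σ i x) = x
      rw [show σ i x = x from dif_neg hx, show σ i x = x from dif_neg hx]
  have hσd : ∀ (i : ℕ) (x : X), d x (σ i x) ≤ (n : ℝ) := by
    intro i x
    by_cases hx : ∃ w, ((x, w), i) ∈ M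
    · exact (hM1 _ (hσspec i x hx)).1
    · rw [show σ i x = x from dif_neg hx, S.hm.refl]
      positivity
  refine ⟨hent, (Finset.range K).image (fun i => (hσinv i).toPerm (σ i)), ?_, ?_⟩
  · intro g hg
    simp only [Finset.coe_image, Set.mem_image, Finset.mem_coe, Finset.mem_range] at hg
    obtain ⟨i, -, rfl⟩ := hg
    refine S.perm_mem _ n (fun x => ?_)
    rw [Function.Involutive.coe_toPerm]
    exact hσd i x
  · intro p hp
    by_cases hd : p.2 = p.1
    · exact Or.inl hd
    · right
      have hpm : (p.1, p.2) ∈ mball d n := hn p hp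
      obtain ⟨i, hiK, hiM⟩ := htotal p.1 p.2 hpm (fun hh => hd hh.symm)
      refine ⟨(hσinv i).toPerm (σ i), ?_, ?_⟩
      · simp only [Finset.coe_image, Set.mem_image, Finset.mem_coe, Finset.mem_range]
        exact ⟨i, hiK, rfl⟩
      · rw [Function.Involutive.coe_toPerm]
        exact hM4 _ _ _ _ hiM (hσspec i p.1 ⟨p.2, hiM⟩)

/-- The main theorem, bundled form. -/
theorem main : 𝓔 = permCoarse (hPermGroup 𝓔 ℝ) := by
  ext E
  constructor
  · exact fun hE => S.mem_permCoarse hE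
  · rintro ⟨hent, F, hF, hsub⟩
    have hbd : ∀ g : Equiv.Perm X, ∃ n : ℕ, g ∈ hPermGroup 𝓔 ℝ → ∀ x, d x (g x) ≤ (n : ℝ) := by
      intro g
      by_cases hg : g ∈ hPermGroup 𝓔 ℝ
      · obtain ⟨n, hn⟩ := S.displacement_bounded g hg
        exact ⟨n, fun _ => hn⟩
      · exact ⟨0, fun hh => absurd hh hg⟩
    choose nb hnb using hbd
    rw [S.mem_iff]
    refine ⟨hent, F.sup nb, fun p hp => ?_⟩
    rcases hsub hp with h | ⟨g, hgF, h⟩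
    · rw [h, S.hm.refl]
      positivity
    · rw [h]
      calc d p.1 (g p.1) ≤ (nb g : ℝ) := hnb g (hF hgF) p.1
        _ ≤ ((F.sup nb : ℕ) : ℝ) := Nat.cast_le.mpr (Finset.le_sup (Finset.mem_coe.mp hgF))

end Setup
end Statement3Aux

/-- If `(X,𝓔)` is a finitary metrizable coarse space and `G` is the
permutation group of its Higson compactification `h_ℝ(X,𝓔)`, then `𝓔 = 𝓔_G`. -/
theorem statement3 {X : Type u} (𝓔 : Set (Set (X × X))) (hcs : IsCoarseStructure 𝓔)
    (hfin : IsFinitaryCoarse 𝓔) (hmet : IsMetrizableCoarse 𝓔) :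
    𝓔 = permCoarse (hPermGroup 𝓔 ℝ) := by
  obtain ⟨d, hm, hE⟩ := hmet
  exact Statement3Aux.Setup.main ⟨hm, hE, hfin⟩
end

section
/- Let M be a proper metric space. The M-compactification h_M(X,𝓔) of any finitary coarse space (X,𝓔) is M-soft. -/
open Set Filter Topology

universe u u₁ u₂ v w

section AuxProof

variable {X : Type u} {M : Type v} [MetricSpace M]

namespace Statement4Aux

open scoped Classical

variable {𝓔 : Set (Set (X × X))}

lemma diag_mem (hcs : IsCoarseStructure 𝓔) {E : Set (X × X)} (hE : E ∈ 𝓔) :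
    {p : X × X | p.2 = p.1} ∈ 𝓔 := by
  refine hcs.downward _ E (fun x => rfl) ?_ hE
  rintro ⟨a, b⟩ h
  simp only [Set.mem_setOf_eq] at h
  subst h
  exact hcs.ent E hE _

lemma inv_mem (hcs : IsCoarseStructure 𝓔) {E : Set (X × X)} (hE : E ∈ 𝓔) :
    entInv E ∈ 𝓔 := by
  obtain ⟨G, hG, hsub⟩ := hcs.comp_subset _ (diag_mem hcs hE) E hE
  refine hcs.downward _ G (fun x => hcs.ent E hE x) ?_ hG
  intro p hp
  exact hsub ⟨p.1, rfl, hp⟩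

lemma comp_mem (hcs : IsCoarseStructure 𝓔) {E F : Set (X × X)} (hE : E ∈ 𝓔) (hF : F ∈ 𝓔) :
    ∃ G ∈ 𝓔, entComp E F ⊆ G := by
  obtain ⟨G, hG, hsub⟩ := hcs.comp_subset E hE (entInv F) (inv_mem hcs hF)
  refine ⟨G, hG, ?_⟩
  intro p hp
  obtain ⟨y, h1, h2⟩ := hp
  exact hsub ⟨y, h1, h2⟩

lemma union_mem (hcs : IsCoarseStructure 𝓔) {E F : Set (X × X)} (hE : E ∈ 𝓔) (hF : F ∈ 𝓔) :
    ∃ G ∈ 𝓔, E ∪ F ⊆ G := by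
  obtain ⟨G, hG, hsub⟩ := comp_mem hcs hE hF
  refine ⟨G, hG, ?_⟩
  rintro ⟨a, b⟩ (h | h)
  · exact hsub ⟨b, h, hcs.ent F hF b⟩
  · exact hsub ⟨a, hcs.ent E hE a, h⟩

lemma symm_mem (hcs : IsCoarseStructure 𝓔) {E : Set (X × X)} (hE : E ∈ 𝓔) :
    ∃ G ∈ 𝓔, E ∪ entInv E ⊆ G :=
  union_mem hcs hE (inv_mem hcs hE)

lemma bounded_union (hcs : IsCoarseStructure 𝓔) {A B : Set X}
    (hA : IsBoundedSet 𝓔 A) (hB : IsBoundedSet 𝓔 B) : IsBoundedSet 𝓔 (A ∪ B) := by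
  obtain ⟨E, hE, x, hxA⟩ := hA
  obtain ⟨F, hF, y, hyB⟩ := hB
  obtain ⟨E₀, hE₀, hxy⟩ := hcs.cover (x, y)
  obtain ⟨C, hC, hCsub⟩ := comp_mem hcs hE₀ hF
  obtain ⟨G, hG, hGsub⟩ := union_mem hcs hE hC
  refine ⟨G, hG, x, ?_⟩
  rintro a (ha | ha)
  · exact hGsub (Or.inl (hxA ha))
  · exact hGsub (Or.inr (hCsub ⟨y, hxy, hyB ha⟩))

lemma bounded_of_finite (hcs : IsCoarseStructure 𝓔) [Nonempty X] {B : Set X}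
    (hB : B.Finite) : IsBoundedSet 𝓔 B := by
  obtain ⟨x₀⟩ := ‹Nonempty X›
  obtain ⟨E₀, hE₀, -⟩ := hcs.cover (x₀, x₀)
  refine Set.Finite.induction_on (motive := fun s _ => IsBoundedSet 𝓔 s) B hB ⟨E₀, hE₀, x₀, by simp⟩ ?_
  intro a s _ _ ih
  ·
      have h1 : IsBoundedSet 𝓔 {a} := by
        obtain ⟨E, hE, -⟩ := hcs.cover (a, a)
        exact ⟨E, hE, a, by intro y hy; simp at hy; subst hy; exact hcs.ent E hE _⟩
      have := bounded_union hcs h1 ih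
      rw [Set.insert_eq]
      exact this

lemma finite_of_bounded (hfin : IsFinitaryCoarse 𝓔) {B : Set X}
    (hB : IsBoundedSet 𝓔 B) : B.Finite := by
  obtain ⟨E, hE, x, hsub⟩ := hB
  obtain ⟨n, hn⟩ := hfin E hE
  exact ((hn x).1).subset hsub

lemma indicator_mem_soSet (hcs : IsCoarseStructure 𝓔) (x : X) (m0 m1 : M) :
    (fun y => if y = x then m1 else m0) ∈ soSet 𝓔 M := by
  constructor
  · apply Bornology.IsBounded.subset ((Set.finite_singleton m0).insert m1).isBounded
    rintro - ⟨y, rfl⟩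
    by_cases h : y = x <;> simp [h]
  · intro ε hε E hE
    refine ⟨entBall (entInv E) x, ⟨entInv E, inv_mem hcs hE, x, subset_rfl⟩, ?_⟩
    intro x' hx'
    have h0 : ((fun y => if y = x then m1 else m0) '' entBall E x').Subsingleton := by
      rintro - ⟨y, hy, rfl⟩ - ⟨y', hy', rfl⟩
      have hyx : y ≠ x := by rintro rfl; exact hx' hy
      have hy'x : y' ≠ x := by rintro rfl; exact hx' hy'
      simp [hyx, hy'x]
    rw [show EMetric.diam _ = (0:ENNReal) from EMetric.diam_subsingleton h0]
    exact ENNReal.ofReal_pos.2 hε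

lemma deltaMap_injective [Nontrivial M] (hcs : IsCoarseStructure 𝓔) :
    Function.Injective (deltaMap 𝓔 M) := by
  intro x y h
  by_contra hne
  obtain ⟨m1, m0, hm⟩ := exists_pair_ne M
  have h2 : (if x = x then m1 else m0) = (if y = x then m1 else m0) :=
    congrFun h ⟨_, indicator_mem_soSet hcs x m0 m1⟩
  rw [if_pos rfl, if_neg (fun h' => hne h'.symm)] at h2
  exact hm h2

lemma isOpen_singleton_deltaEmb [Nontrivial M] (hcs : IsCoarseStructure 𝓔) (x : X) :
    IsOpen ({deltaEmb 𝓔 M x} : Set (HComp 𝓔 M)) := by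
  obtain ⟨m1, m0, hm⟩ := exists_pair_ne M
  set fx : ↥(soSet 𝓔 M) := ⟨_, indicator_mem_soSet hcs x m0 m1⟩ with hfx
  have hpos : 0 < edist m0 m1 := edist_pos.2 (Ne.symm hm)
  have hU : {deltaEmb 𝓔 M x} =
      (fun g : HComp 𝓔 M => g.1 fx) ⁻¹' (Metric.eball m1 (edist m0 m1)) := by
    apply Set.eq_of_subset_of_subset
    · rintro - rfl
      have : deltaMap 𝓔 M x fx = m1 := by simp [deltaMap, hfx]
      simp only [Set.mem_preimage, deltaEmb, this]
      simpa using hpos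
    · intro g hg
      have hclos : g.1 ∈ closure (Set.range (deltaMap 𝓔 M)) := g.2
      set V : Set (↥(soSet 𝓔 M) → M) := {u | u fx ∈ Metric.eball m1 (edist m0 m1)} with hV
      have hVopen : IsOpen V := (EMetric.isOpen_ball).preimage (continuous_apply fx)
      have hmem : g.1 ∈ V ∩ closure (Set.range (deltaMap 𝓔 M)) := ⟨hg, hclos⟩
      have hsub : V ∩ Set.range (deltaMap 𝓔 M) ⊆ {deltaMap 𝓔 M x} := by
        rintro - ⟨hu, y, rfl⟩
        have : deltaMap 𝓔 M y fx ∈ Metric.eball m1 (edist m0 m1) := hu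
        simp only [deltaMap, hfx] at this
        by_cases hyx : y = x
        · subst hyx; rfl
        · rw [if_neg hyx] at this
          exact absurd (EMetric.mem_ball.1 this) (lt_irrefl _)
      have := hVopen.inter_closure hmem
      have := (closure_mono hsub) this
      rw [closure_singleton] at this
      exact Set.mem_singleton_iff.2 (Subtype.ext this)
  rw [hU]
  exact (EMetric.isOpen_ball).preimage ((continuous_apply fx).comp continuous_subtype_val)

lemma isolatedPoints_eq [Nontrivial M] (hcs : IsCoarseStructure 𝓔) :
    isolatedPoints (HComp 𝓔 M) = Set.range (deltaEmb 𝓔 M) := by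
  apply Set.eq_of_subset_of_subset
  · intro w hw
    have hopen : IsOpen ({w} : Set (HComp 𝓔 M)) := hw
    rw [isOpen_induced_iff] at hopen
    obtain ⟨V, hVopen, hVeq⟩ := hopen
    have hwV : w.1 ∈ V := by
      have : w ∈ Subtype.val ⁻¹' V := by rw [hVeq]; rfl
      exact this
    have hclos : w.1 ∈ closure (Set.range (deltaMap 𝓔 M)) := w.2
    rw [mem_closure_iff] at hclos
    obtain ⟨u, huV, y, rfl⟩ := hclos V hVopen hwV
    have : deltaEmb 𝓔 M y ∈ Subtype.val ⁻¹' V := huV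
    rw [hVeq] at this
    exact ⟨y, Set.mem_singleton_iff.1 this⟩
  · rintro - ⟨x, rfl⟩
    exact isOpen_singleton_deltaEmb hcs x

lemma exists_homeo [Nontrivial M] (hcs : IsCoarseStructure 𝓔) (hfin : IsFinitaryCoarse 𝓔)
    (σ : X → X) (hinv : ∀ x, σ (σ x) = x) {G : Set (X × X)} (hG : G ∈ 𝓔)
    (hd : ∀ x, (x, σ x) ∈ G) :
    ∃ h : HComp 𝓔 M ≃ₜ HComp 𝓔 M,
      (∀ z : HComp 𝓔 M, z ∉ Set.range (deltaEmb 𝓔 M) → h z = z) ∧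
      ∀ x : X, h (deltaEmb 𝓔 M x) = deltaEmb 𝓔 M (σ x) := by
  classical
  set hfun : HComp 𝓔 M → HComp 𝓔 M := fun w =>
    if hw : w.1 ∈ Set.range (deltaMap 𝓔 M) then deltaEmb 𝓔 M (σ (Classical.choose hw)) else w
    with hfun_def
  have hδ : ∀ x : X, hfun (deltaEmb 𝓔 M x) = deltaEmb 𝓔 M (σ x) := by
    intro x
    have hw : (deltaEmb 𝓔 M x).1 ∈ Set.range (deltaMap 𝓔 M) := ⟨x, rfl⟩
    rw [hfun_def]
    simp only [dif_pos hw]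
    have hspec : deltaMap 𝓔 M (Classical.choose hw) = deltaMap 𝓔 M x := Classical.choose_spec hw
    rw [deltaMap_injective hcs (M := M) hspec]
  have hfix : ∀ w : HComp 𝓔 M, w.1 ∉ Set.range (deltaMap 𝓔 M) → hfun w = w := by
    intro w hw; rw [hfun_def]; simp only [dif_neg hw]
  have hinvol : ∀ w, hfun (hfun w) = w := by
    intro w
    by_cases hw : w.1 ∈ Set.range (deltaMap 𝓔 M)
    · obtain ⟨x, hx⟩ := hw
      have hwx : w = deltaEmb 𝓔 M x := Subtype.ext hx.symm
      rw [hwx, hδ, hδ, hinv]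
    · rw [hfix w hw, hfix w hw]
  have hcont : Continuous hfun := by
    rw [continuous_iff_continuousAt]
    intro w
    by_cases hw : w.1 ∈ Set.range (deltaMap 𝓔 M)
    · obtain ⟨x, hx⟩ := hw
      have hwx : w = deltaEmb 𝓔 M x := Subtype.ext hx.symm
      rw [hwx]
      rw [ContinuousAt, Filter.tendsto_def]
      intro V hV
      have hopen := isOpen_singleton_deltaEmb (M := M) hcs x
      filter_upwards [hopen.mem_nhds rfl] with u hu
      have : u = deltaEmb 𝓔 M x := hu
      rw [Set.mem_preimage, this]
      exact mem_of_mem_nhds hV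
    · have hfw : hfun w = w := hfix w hw
      rw [ContinuousAt, hfw, tendsto_subtype_rng, tendsto_pi_nhds]
      intro f
      rw [Metric.tendsto_nhds]
      intro ε hε
      obtain ⟨B, hBbd, hBdiam⟩ := f.2.2 (ε/2) (half_pos hε) G hG
      have hBfin : B.Finite := finite_of_bounded hfin hBbd
      set W : Set (↥(soSet 𝓔 M) → M) :=
        {u | dist (u f) (w.1 f) < ε/2} \ (deltaMap 𝓔 M '' B) with hW
      have hWopen : IsOpen W := by
        apply IsOpen.sdiff
        · have hball : {u : ↥(soSet 𝓔 M) → M | dist (u f) (w.1 f) < ε/2} =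
              (fun u : ↥(soSet 𝓔 M) → M => u f) ⁻¹' Metric.ball (w.1 f) (ε/2) := rfl
          rw [hball]
          exact Metric.isOpen_ball.preimage (continuous_apply f)
        · exact (hBfin.image _).isClosed
      have hwW : w.1 ∈ W := by
        constructor
        · simp [half_pos hε]
        · intro hmem
          exact hw (Set.image_subset_range _ _ hmem)
      have hnhds : Subtype.val ⁻¹' W ∈ 𝓝 w :=
        continuous_subtype_val.continuousAt.preimage_mem_nhds (hWopen.mem_nhds hwW)
      filter_upwards [hnhds] with u hu
      by_cases hu' : u.1 ∈ Set.range (deltaMap 𝓔 M)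
      · obtain ⟨x, hx⟩ := hu'
        have hux : u = deltaEmb 𝓔 M x := Subtype.ext hx.symm
        have hxB : x ∉ B := by
          intro hxB
          exact hu.2 ⟨x, hxB, hx⟩
        have hval : (hfun u).1 f = f.1 (σ x) := by rw [hux, hδ]; rfl
        have huf : u.1 f = f.1 x := by rw [hux]; rfl
        have h1 : dist (f.1 (σ x)) (f.1 x) < ε/2 := by
          have hmem1 : f.1 (σ x) ∈ f.1 '' entBall G x := ⟨σ x, hd x, rfl⟩
          have hmem2 : f.1 x ∈ f.1 '' entBall G x := ⟨x, hcs.ent G hG x, rfl⟩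
          have := lt_of_le_of_lt (EMetric.edist_le_diam_of_mem hmem1 hmem2) (hBdiam x hxB)
          exact edist_lt_ofReal.1 this
        have h2 : dist (u.1 f) (w.1 f) < ε/2 := hu.1
        rw [hval]
        calc dist (f.1 (σ x)) (w.1 f) ≤ dist (f.1 (σ x)) (f.1 x) + dist (f.1 x) (w.1 f) :=
              dist_triangle _ _ _
          _ < ε/2 + ε/2 := by rw [← huf] at *; exact add_lt_add h1 h2
          _ = ε := add_halves ε
      · rw [hfix u hu']
        exact lt_of_lt_of_le hu.1 (le_of_lt (half_lt_self hε))
  refine ⟨⟨⟨hfun, hfun, hinvol, hinvol⟩, hcont, hcont⟩, ?_, ?_⟩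
  · intro z hz
    apply hfix
    intro hzr
    obtain ⟨x, hx⟩ := hzr
    exact hz ⟨x, Subtype.ext hx⟩
  · exact hδ

end Statement4Aux

end AuxProof


/-- The `M`-compactification of any finitary coarse space is `M`-soft. -/
theorem statement4 {X : Type u} (M : Type v) [MetricSpace M] [ProperSpace M] [Nontrivial M]
    (𝓔 : Set (Set (X × X))) (hcs : IsCoarseStructure 𝓔) (hfin : IsFinitaryCoarse 𝓔) :
    IsMSoft (HComp 𝓔 M) M := by
  classical
  open Statement4Aux in
  intro φ hφbd hosc
  obtain ⟨z, hz⟩ := hosc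
  have hXne : Nonempty X := by
    by_contra hX
    rw [not_nonempty_iff] at hX
    have hre : Set.range (deltaMap 𝓔 M) = ∅ := Set.range_eq_empty _
    have hz1 : z.1 ∈ closure (Set.range (deltaMap 𝓔 M)) := z.2
    rw [hre, closure_empty] at hz1
    exact hz1
  have hiso := Statement4Aux.isolatedPoints_eq (M := M) (𝓔 := 𝓔) hcs
  have hinj : Function.Injective (deltaEmb 𝓔 M) := fun a b h =>
    Statement4Aux.deltaMap_injective hcs (congrArg Subtype.val h)
  have hmem : ∀ x : X, deltaEmb 𝓔 M x ∈ isolatedPoints (HComp 𝓔 M) := by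
    intro x; rw [hiso]; exact ⟨x, rfl⟩
  set e : X → ↥(isolatedPoints (HComp 𝓔 M)) := fun x => ⟨deltaEmb 𝓔 M x, hmem x⟩ with he
  have hebij : Function.Bijective e := by
    constructor
    · intro a b h
      exact hinj (congrArg Subtype.val h)
    · rintro ⟨w, hw⟩
      rw [hiso] at hw
      obtain ⟨x, rfl⟩ := hw
      exact ⟨x, rfl⟩
  set eX : X ≃ ↥(isolatedPoints (HComp 𝓔 M)) := Equiv.ofBijective e hebij with heX
  set ψ : X → M := fun x => φ (eX x) with hψ
  by_cases hso : SlowlyOscillating 𝓔 ψ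
  · -- Case A : ψ slowly oscillating, contradiction with positive oscillation
    exfalso
    have hψbd : Bornology.IsBounded (Set.range ψ) :=
      hφbd.subset (by rintro - ⟨x, rfl⟩; exact ⟨eX x, rfl⟩)
    set f₀ : ↥(soSet 𝓔 M) := ⟨ψ, hψbd, hso⟩ with hf₀
    have hφval : ∀ w : ↥(isolatedPoints (HComp 𝓔 M)), φ w = w.1.1 f₀ := by
      intro w
      obtain ⟨x, rfl⟩ := hebij.2 w
      rfl
    have hbound : ∀ r : ENNReal, 0 < r → oscAt φ z ≤ 2 * r := by
      intro r hr
      set O : Set (HComp 𝓔 M) := {g | edist (g.1 f₀) (z.1 f₀) < r} with hO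
      have hOopen : IsOpen O := by
        have he2 : O = (fun g : HComp 𝓔 M => g.1 f₀) ⁻¹' EMetric.ball (z.1 f₀) r := rfl
        rw [he2]
        exact EMetric.isOpen_ball.preimage ((continuous_apply f₀).comp continuous_subtype_val)
      have hzO : z ∈ O := by simp [hO, hr]
      have himg : φ '' (Subtype.val ⁻¹' O) ⊆ EMetric.ball (z.1 f₀) r := by
        rintro - ⟨w, hwO, rfl⟩
        rw [hφval w]
        exact hwO
      calc oscAt φ z ≤ EMetric.diam (φ '' (Subtype.val ⁻¹' O)) :=
            iInf_le_of_le O (iInf_le_of_le hOopen (iInf_le_of_le hzO le_rfl))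
        _ ≤ EMetric.diam (EMetric.ball (z.1 f₀) r) := EMetric.diam_mono himg
        _ ≤ 2 * r := EMetric.diam_ball
    obtain ⟨q, hq0, hq1, hq2⟩ := ENNReal.lt_iff_exists_real_btwn.1 hz
    have hq1' : (0 : ENNReal) < ENNReal.ofReal q := hq1
    have hhalf : (0 : ENNReal) < ENNReal.ofReal q / 2 :=
      ENNReal.div_pos (ne_of_gt hq1') (by norm_num)
    have := hbound _ hhalf
    rw [ENNReal.mul_div_cancel' (by norm_num) (by norm_num)] at this
    exact absurd (lt_of_le_of_lt this hq2) (lt_irrefl _)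
  · -- Case B : ψ not slowly oscillating
    rw [SlowlyOscillating] at hso
    push_neg at hso
    obtain ⟨ε, hε, E, hE, hT⟩ := hso
    obtain ⟨G₁, hG₁, hsub₁⟩ := comp_mem hcs (inv_mem hcs hE) hE
    obtain ⟨G, hG, hsubG⟩ := symm_mem hcs hG₁
    -- pairs avoiding any finite set
    have key : ∀ F : Finset X, ∃ p : X × X, p.1 ≠ p.2 ∧ (p.1, p.2) ∈ G₁ ∧
        ENNReal.ofReal (ε/2) < edist (ψ p.1) (ψ p.2) ∧ p.1 ∉ F ∧ p.2 ∉ F := by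
      intro F
      set Bd : Set X := ⋃ f ∈ F, entBall (entInv E) f with hBd
      have hBdfin : Bd.Finite := by
        apply Set.Finite.biUnion F.finite_toSet
        intro f _
        obtain ⟨n, hn⟩ := hfin (entInv E) (inv_mem hcs hE)
        exact (hn f).1
      obtain ⟨x, hxBd, hxdiam⟩ := hT Bd (bounded_of_finite hcs hBdfin)
      have hlt : ENNReal.ofReal (ε/2) < EMetric.diam (ψ '' entBall E x) :=
        lt_of_lt_of_le (ENNReal.ofReal_lt_ofReal_iff hε |>.2 (by linarith)) hxdiam
      have hnle : ¬ EMetric.diam (ψ '' entBall E x) ≤ ENNReal.ofReal (ε/2) := not_le.2 hlt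
      rw [show EMetric.diam (ψ '' entBall E x) ≤ ENNReal.ofReal (ε/2) ↔ _ from EMetric.diam_le_iff] at hnle
      push_neg at hnle
      obtain ⟨-, ⟨y, hy, rfl⟩, -, ⟨y', hy', rfl⟩, hyy'⟩ := hnle
      have hne : y ≠ y' := by
        rintro rfl
        rw [edist_self] at hyy'
        exact absurd hyy' (not_lt.2 (zero_le (a := ENNReal.ofReal (ε/2))))
      have hyG : (y, y') ∈ G₁ := hsub₁ ⟨x, hy, hy'⟩
      have hyF : y ∉ F := by
        intro hyF
        exact hxBd (Set.mem_biUnion hyF (by exact hy : (y, x) ∈ entInv E))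
      have hy'F : y' ∉ F := by
        intro hy'F
        exact hxBd (Set.mem_biUnion hy'F (by exact hy' : (y', x) ∈ entInv E))
      exact ⟨(y, y'), hne, hyG, hyy', hyF, hy'F⟩
    choose pf hp1 hp2 hp3 hp4 hp5 using key
    -- recursive construction of an infinite family of disjoint pairs
    set Fs : ℕ → Finset X := fun n =>
      Nat.rec ∅ (fun _ Fn => insert (pf Fn).1 (insert (pf Fn).2 Fn)) n with hFs
    set A : ℕ → X := fun n => (pf (Fs n)).1 with hA
    set B : ℕ → X := fun n => (pf (Fs n)).2 with hB
    have hFsucc : ∀ n, Fs (n + 1) = insert (A n) (insert (B n) (Fs n)) := fun n => rfl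
    have hFmono : ∀ m n, m ≤ n → Fs m ⊆ Fs n := by
      intro m n hmn
      induction n with
      | zero => cases Nat.le_zero.1 hmn; exact subset_rfl
      | succ k ih =>
          rcases Nat.lt_or_ge m (k+1) with h | h
          · refine (ih (Nat.lt_succ_iff.1 h)).trans ?_
            rw [hFsucc]
            intro a ha
            exact Finset.mem_insert_of_mem (Finset.mem_insert_of_mem ha)
          · cases Nat.le_antisymm hmn h; exact subset_rfl
    have hAmem : ∀ n, A n ∈ Fs (n+1) := by
      intro n; rw [hFsucc]; exact Finset.mem_insert_self _ _
    have hBmem : ∀ n, B n ∈ Fs (n+1) := by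
      intro n; rw [hFsucc]; exact Finset.mem_insert_of_mem (Finset.mem_insert_self _ _)
    have hAnot : ∀ n, A n ∉ Fs n := fun n => hp4 (Fs n)
    have hBnot : ∀ n, B n ∉ Fs n := fun n => hp5 (Fs n)
    have hAB : ∀ n, A n ≠ B n := fun n => hp1 (Fs n)
    have hdistinct : ∀ m n, m < n → A m ≠ A n ∧ A m ≠ B n ∧ B m ≠ A n ∧ B m ≠ B n := by
      intro m n hmn
      have h1 : A m ∈ Fs n := hFmono _ _ hmn (hAmem m)
      have h2 : B m ∈ Fs n := hFmono _ _ hmn (hBmem m)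
      refine ⟨?_, ?_, ?_, ?_⟩ <;> intro hc
      · exact hAnot n (hc ▸ h1)
      · exact hBnot n (hc ▸ h1)
      · exact hAnot n (hc ▸ h2)
      · exact hBnot n (hc ▸ h2)
    have hAinj : Function.Injective A := by
      intro m n hc
      rcases lt_trichotomy m n with h | h | h
      · exact absurd hc (hdistinct m n h).1
      · exact h
      · exact absurd hc.symm (hdistinct n m h).1
    have hBinj : Function.Injective B := by
      intro m n hc
      rcases lt_trichotomy m n with h | h | h
      · exact absurd hc (hdistinct m n h).2.2.2
      · exact h
      · exact absurd hc.symm (hdistinct n m h).2.2.2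
    have hABcross : ∀ m n, A m ≠ B n := by
      intro m n
      rcases lt_trichotomy m n with h | h | h
      · exact (hdistinct m n h).2.1
      · exact h ▸ hAB m
      · intro hc; exact (hdistinct n m h).2.2.1 hc.symm
    -- the involution
    set σ : X → X := fun x =>
      if h : ∃ n, x = A n then B (Nat.find h)
      else if h' : ∃ n, x = B n then A (Nat.find h')
      else x with hσ
    have hσA : ∀ n, σ (A n) = B n := by
      intro n
      have h : ∃ k, A n = A k := ⟨n, rfl⟩
      rw [hσ]
      simp only [dif_pos h]
      rw [hAinj (Nat.find_spec h).symm]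
    have hσB : ∀ n, σ (B n) = A n := by
      intro n
      have h0 : ¬ ∃ k, B n = A k := by
        rintro ⟨k, hk⟩; exact hABcross k n hk.symm
      have h : ∃ k, B n = B k := ⟨n, rfl⟩
      rw [hσ]
      simp only [dif_neg h0, dif_pos h]
      rw [hBinj (Nat.find_spec h).symm]
    have hσother : ∀ x, (¬ ∃ n, x = A n) → (¬ ∃ n, x = B n) → σ x = x := by
      intro x h1 h2
      rw [hσ]
      simp only [dif_neg h1, dif_neg h2]
    have hσinv : ∀ x, σ (σ x) = x := by
      intro x
      by_cases h1 : ∃ n, x = A n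
      · obtain ⟨n, rfl⟩ := h1
        rw [hσA, hσB]
      · by_cases h2 : ∃ n, x = B n
        · obtain ⟨n, rfl⟩ := h2
          rw [hσB, hσA]
        · rw [hσother x h1 h2, hσother x h1 h2]
    have hσd : ∀ x, (x, σ x) ∈ G := by
      intro x
      by_cases h1 : ∃ n, x = A n
      · obtain ⟨n, rfl⟩ := h1
        rw [hσA]
        exact hsubG (Or.inl (hp2 (Fs n)))
      · by_cases h2 : ∃ n, x = B n
        · obtain ⟨n, rfl⟩ := h2
          rw [hσB]
          exact hsubG (Or.inr (hp2 (Fs n)))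
        · rw [hσother x h1 h2]
          exact hcs.ent G hG x
    obtain ⟨h, hfix, hδ⟩ := exists_homeo (M := M) hcs hfin σ hσinv hG hσd
    have hσiso_inv : Function.Involutive (fun p => eX (σ (eX.symm p))) := by
      intro p
      simp [hσinv]
    set σ' : Equiv.Perm ↥(isolatedPoints (HComp 𝓔 M)) := hσiso_inv.toPerm _ with hσ'
    have hσ'app : ∀ x : X, σ' (eX x) = eX (σ x) := by
      intro x
      rw [hσ']
      show eX (σ (eX.symm (eX x))) = eX (σ x)
      rw [Equiv.symm_apply_apply]
    refine ⟨σ', ⟨h, ?_, ?_⟩, ε/2, half_pos hε, ?_⟩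
    · intro w hw
      apply hfix
      rw [← hiso]
      exact hw
    · intro w
      obtain ⟨x, rfl⟩ := (Equiv.ofBijective e hebij).surjective w
      have h1 : ((eX x : ↥(isolatedPoints (HComp 𝓔 M))) : HComp 𝓔 M) = deltaEmb 𝓔 M x := rfl
      rw [h1, hδ, hσ'app]
      rfl
    · have hsubS : Set.range (fun n => eX (A n)) ⊆
          {x : ↥(isolatedPoints (HComp 𝓔 M)) | ε/2 ≤ dist (φ (σ' x)) (φ x)} := by
        rintro - ⟨n, rfl⟩
        have h1 : σ' (eX (A n)) = eX (B n) := by rw [hσ'app, hσA]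
        have h2 : ENNReal.ofReal (ε/2) < edist (ψ (A n)) (ψ (B n)) := hp3 (Fs n)
        have h3 : ε/2 ≤ dist (ψ (A n)) (ψ (B n)) := by
          by_contra hc
          push_neg at hc
          exact absurd (edist_lt_ofReal.2 hc) (not_lt.2 (le_of_lt h2))
        simp only [Set.mem_setOf_eq, h1]
        calc ε/2 ≤ dist (ψ (A n)) (ψ (B n)) := h3
          _ = dist (φ (eX (B n))) (φ (eX (A n))) := dist_comm _ _
      refine Set.Infinite.mono hsubS ?_
      apply Set.infinite_range_of_injective
      intro m n hmn
      exact hAinj (eX.injective hmn)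
end

section
/- Let M be a proper metric space, K a compactification, X the set of isolated points of K, and (X,𝓔_{X,K}) the permutation coarse space of K. Then K is M-equivalent to the M-compactification h_M(X,𝓔_{X,K}) of the coarse space (X,𝓔_{X,K}) if and only if K is M-soft. -/
open Set Filter Topology

universe u u₁ u₂ v w

section Aux

open ENNReal

attribute [local instance] Classical.decEq

variable {K : Type u} [TopologicalSpace K] {M : Type v} [MetricSpace M]

/-- permEnt of a finite subset of homeoPerms is in the permutation coarse structure. -/
lemma permEnt_mem_permCoarse {Y : Type u₁} (S : Set (Equiv.Perm Y)) (F : Finset (Equiv.Perm Y))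
    (hF : (F : Set (Equiv.Perm Y)) ⊆ S) : permEnt (F : Set (Equiv.Perm Y)) ∈ permCoarse S :=
  ⟨fun _ => Or.inl rfl, F, hF, subset_rfl⟩

lemma entBall_permEnt_subset {Y : Type u₁} (F : Finset (Equiv.Perm Y)) (x : Y) :
    entBall (permEnt (F : Set (Equiv.Perm Y))) x ⊆ insert x ((fun g : Equiv.Perm Y => g x) '' F) := by
  rintro y (h | ⟨g, hg, hy⟩)
  · rw [show y = x from h]; exact Set.mem_insert x _
  · rw [show y = g x from hy]; exact Set.mem_insert_of_mem _ ⟨g, hg, rfl⟩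

lemma mem_entBall_self {Y : Type u₁} {E : Set (Y × Y)} (hE : IsEntourage E) (x : Y) :
    x ∈ entBall E x := hE x

lemma bounded_finite {Y : Type u₁} {S : Set (Equiv.Perm Y)} {B : Set Y}
    (hB : IsBoundedSet (permCoarse S) B) : B.Finite := by
  obtain ⟨E, ⟨-, F, -, hEF⟩, x, hx⟩ := hB
  refine Set.Finite.subset
    (Set.Finite.insert x (F.finite_toSet.image (fun g : Equiv.Perm Y => g x)))
    (fun y hy => entBall_permEnt_subset F x (hEF (hx hy)))

lemma continuous_swap_of_isolated {K : Type u} [TopologicalSpace K] [T2Space K]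
    (a b : K) (ha : IsOpen ({a} : Set K)) (hb : IsOpen ({b} : Set K)) :
    Continuous (Equiv.swap a b : K → K) := by
  classical
  rw [continuous_iff_continuousAt]
  intro x
  by_cases hxa : x = a
  · subst hxa
    have hpure : 𝓝 x = pure x := le_antisymm
      (le_def.2 fun s hs => mem_of_superset (ha.mem_nhds rfl) (by simpa using hs))
      (pure_le_nhds x)
    rw [ContinuousAt, hpure]
    exact tendsto_pure_nhds _ x
  · by_cases hxb : x = b
    · subst hxb
      have hpure : 𝓝 x = pure x := le_antisymm
        (le_def.2 fun s hs => mem_of_superset (hb.mem_nhds rfl) (by simpa using hs))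
        (pure_le_nhds x)
      rw [ContinuousAt, hpure]
      exact tendsto_pure_nhds _ x
    · have hU : ({a, b} : Set K)ᶜ ∈ 𝓝 x := by
        refine (IsClosed.union isClosed_singleton isClosed_singleton).isOpen_compl.mem_nhds ?_
        simp [hxa, hxb]
      have heq : (Equiv.swap a b : K → K) =ᶠ[𝓝 x] id := by
        filter_upwards [hU] with y hy
        have h1 : y ≠ a := fun h => hy (by simp [h])
        have h2 : y ≠ b := fun h => hy (by simp [h])
        simp [Equiv.swap_apply_of_ne_of_ne h1 h2]
      exact continuousAt_id.congr heq.symm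

lemma swap_mem_homeoPerms {K : Type u} [TopologicalSpace K] (hK : IsCompactification K)
    (a b : ↥(isolatedPoints K)) : Equiv.swap a b ∈ homeoPerms K := by
  classical
  haveI : T2Space K := hK.2.1
  refine ⟨⟨Equiv.swap (a : K) (b : K),
    continuous_swap_of_isolated _ _ a.2 b.2, ?_⟩, ?_, ?_⟩
  · show Continuous ((Equiv.swap (a : K) (b : K)).symm : K → K)
    rw [Equiv.symm_swap]
    exact continuous_swap_of_isolated _ _ a.2 b.2
  · intro z hz
    have h1 : z ≠ (a : K) := fun h => hz (h ▸ a.2)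
    have h2 : z ≠ (b : K) := fun h => hz (h ▸ b.2)
    exact Equiv.swap_apply_of_ne_of_ne h1 h2
  · intro x
    show Equiv.swap (a : K) (b : K) (x : K) = _
    by_cases hxa : x = a
    · subst hxa; simp
    · by_cases hxb : x = b
      · subst hxb; simp
      · have h1 : (x : K) ≠ (a : K) := fun h => hxa (Subtype.ext h)
        have h2 : (x : K) ≠ (b : K) := fun h => hxb (Subtype.ext h)
        rw [Equiv.swap_apply_of_ne_of_ne h1 h2, Equiv.swap_apply_of_ne_of_ne hxa hxb]

lemma finite_isBounded {K : Type u} [TopologicalSpace K] (hK : IsCompactification K)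
    (x₀ : ↥(isolatedPoints K)) {B : Set ↥(isolatedPoints K)} (hB : B.Finite) :
    IsBoundedSet (permCoarse (homeoPerms K)) B := by
  classical
  refine ⟨permEnt ((hB.toFinset.image (fun b => Equiv.swap x₀ b) : Finset _) :
      Set (Equiv.Perm ↥(isolatedPoints K))), ?_, x₀, ?_⟩
  · refine permEnt_mem_permCoarse _ _ ?_
    intro g hg
    simp only [Finset.coe_image, Set.mem_image, Finset.mem_coe] at hg
    obtain ⟨b, -, rfl⟩ := hg
    exact swap_mem_homeoPerms hK x₀ b
  · intro b hb
    refine Or.inr ⟨Equiv.swap x₀ b, ?_, by simp⟩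
    simp only [Finset.coe_image, Set.mem_image, Finset.mem_coe, Set.Finite.mem_toFinset]
    exact ⟨b, hb, rfl⟩

/-- If all displacement sets are finite, the function is slowly oscillating w.r.t.
the permutation coarse structure. -/
lemma so_of_finiteBad {K : Type u} [TopologicalSpace K] (hK : IsCompactification K)
    {M : Type v} [MetricSpace M] [Nonempty ↥(isolatedPoints K)]
    (φ : ↥(isolatedPoints K) → M)
    (h : ∀ σ ∈ homeoPerms K, ∀ ε : ℝ, 0 < ε →
      {x : ↥(isolatedPoints K) | ε ≤ dist (φ (σ x)) (φ x)}.Finite) :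
    SlowlyOscillating (permCoarse (homeoPerms K)) φ := by
  intro ε hε E hE
  obtain ⟨hent, F, hF, hEF⟩ := hE
  obtain ⟨x₀⟩ := ‹Nonempty ↥(isolatedPoints K)›
  set B : Set ↥(isolatedPoints K) :=
    ⋃ g ∈ (F : Set (Equiv.Perm ↥(isolatedPoints K))),
      {x | ε / 3 ≤ dist (φ (g x)) (φ x)} with hB
  have hBfin : B.Finite :=
    Set.Finite.biUnion F.finite_toSet (fun g hg => h g (hF hg) (ε / 3) (by linarith))
  refine ⟨B, finite_isBounded hK x₀ hBfin, fun x hx => ?_⟩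
  have key : ∀ y ∈ entBall E x, dist (φ y) (φ x) < ε / 3 := by
    rintro y hy
    rcases hEF hy with h' | ⟨g, hg, h'⟩
    · rw [show y = x from h']; simpa using (by linarith : (0:ℝ) < ε / 3)
    · rw [show y = g x from h']
      by_contra hcon
      exact hx (Set.mem_biUnion hg (le_of_not_gt hcon))
  have hdiam : EMetric.diam (φ '' entBall E x) ≤ ENNReal.ofReal (2 * ε / 3) := by
    refine EMetric.diam_le ?_
    rintro p ⟨y1, hy1, rfl⟩ q ⟨y2, hy2, rfl⟩
    rw [edist_dist]
    refine ENNReal.ofReal_le_ofReal ?_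
    calc dist (φ y1) (φ y2) ≤ dist (φ y1) (φ x) + dist (φ x) (φ y2) := dist_triangle _ _ _
      _ ≤ ε / 3 + ε / 3 := by
          have := key y1 hy1
          have h2 := key y2 hy2
          rw [dist_comm (φ x)]
          linarith
      _ ≤ 2 * ε / 3 := by linarith
  exact lt_of_le_of_lt hdiam ((ENNReal.ofReal_lt_ofReal_iff hε).2 (by linarith))

/-- Displacement sets of restrictions of continuous functions on `K` are finite. -/
lemma finiteBad_of_continuous {K : Type u} [TopologicalSpace K] (hK : IsCompactification K)
    {M : Type v} [MetricSpace M] (f : K → M) (hf : Continuous f)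
    (σ : Equiv.Perm ↥(isolatedPoints K)) (hσ : σ ∈ homeoPerms K) (ε : ℝ) (hε : 0 < ε) :
    {x : ↥(isolatedPoints K) | ε ≤ dist (f ((σ x) : K)) (f (x : K))}.Finite := by
  haveI : CompactSpace K := hK.1
  haveI : T2Space K := hK.2.1
  obtain ⟨h, hfix, hcomm⟩ := hσ
  by_contra hinf
  set S := {x : ↥(isolatedPoints K) | ε ≤ dist (f ((σ x) : K)) (f (x : K))} with hS
  have hinf' : S.Infinite := hinf
  let e := hinf'.natEmbedding
  let xn : ℕ → ↥(isolatedPoints K) := fun n => (e n : ↥S)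
  let kn : ℕ → K := fun n => (xn n : K)
  have hkninj : Function.Injective kn := by
    intro m n hmn
    exact e.injective (Subtype.ext (Subtype.ext hmn))
  obtain ⟨𝒰, h𝒰⟩ : ∃ 𝒰 : Ultrafilter ℕ, (𝒰 : Filter ℕ) ≤ cofinite :=
    ⟨Ultrafilter.of cofinite, Ultrafilter.of_le _⟩
  obtain ⟨z, -, hz⟩ := isCompact_univ.ultrafilter_le_nhds (𝒰.map kn)
    (by simp [Filter.le_principal_iff])
  -- the function u
  set u : K → ℝ := fun w => dist (f (h w)) (f w) with hu
  have hucont : Continuous u := (hf.comp h.continuous).dist hf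
  have hukn : ∀ n, ε ≤ u (kn n) := by
    intro n
    have hmem : xn n ∈ S := (e n).2
    have : u (kn n) = dist (f ((σ (xn n)) : K)) (f ((xn n) : K)) := by
      rw [hu]; simp only [kn]; rw [hcomm (xn n)]
    rw [this]
    exact hmem
  have htendsto : Tendsto kn (𝒰 : Filter ℕ) (𝓝 z) := hz
  have huz : ε ≤ u z :=
    ge_of_tendsto ((hucont.tendsto z).comp htendsto) (Eventually.of_forall hukn)
  -- z is not isolated
  have hziso : z ∉ isolatedPoints K := by
    intro hziso
    have hsingleton : {n : ℕ | kn n = z} ∈ 𝒰 := by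
      have : {z} ∈ 𝓝 z := (hziso : IsOpen ({z} : Set K)).mem_nhds rfl
      have := htendsto this
      simpa [Set.preimage, Set.mem_singleton_iff] using this
    have hfin : {n : ℕ | kn n = z}.Finite :=
      Set.Subsingleton.finite (fun m hm n hn => hkninj (hm.trans hn.symm))
    have hcompl : {n : ℕ | kn n = z}ᶜ ∈ 𝒰 := h𝒰 hfin.compl_mem_cofinite
    have hmem2 : (∅ : Set ℕ) ∈ (𝒰 : Filter ℕ) := by
      have := Filter.inter_mem hsingleton hcompl
      simpa using this
    exact (Filter.empty_notMem (𝒰 : Filter ℕ)) hmem2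
  have huz0 : u z = 0 := by rw [hu]; simp [hfix z hziso]
  rw [huz0] at huz
  linarith

/-- Restrictions of continuous functions on a compact space are bounded. -/
lemma bounded_of_ucSet {K : Type u} [TopologicalSpace K] (hK : IsCompactification K)
    {M : Type v} [MetricSpace M] {φ : ↥(isolatedPoints K) → M} (hφ : φ ∈ ucSet K M) :
    Bornology.IsBounded (Set.range φ) := by
  haveI : CompactSpace K := hK.1
  obtain ⟨f, hf, hfx⟩ := hφ
  refine Bornology.IsBounded.subset ((isCompact_univ.image hf).isBounded) ?_
  rintro - ⟨x, rfl⟩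
  exact ⟨x, trivial, hfx x⟩

/-- Restrictions of continuous functions have zero oscillation everywhere. -/
lemma oscAt_eq_zero_of_ucSet {K : Type u} [TopologicalSpace K]
    {M : Type v} [MetricSpace M] {φ : ↥(isolatedPoints K) → M} (hφ : φ ∈ ucSet K M)
    (z : K) : oscAt φ z = 0 := by
  obtain ⟨f, hf, hfx⟩ := hφ
  refine le_antisymm ?_ (zero_le)
  have key : ∀ ε : ℝ, 0 < ε → oscAt φ z ≤ ENNReal.ofReal ε := by
    intro ε hε
    have hball : f ⁻¹' (Metric.ball (f z) (ε / 2)) ∈ 𝓝 z :=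
      hf.continuousAt (Metric.ball_mem_nhds _ (by linarith))
    obtain ⟨O, hOsub, hOopen, hzO⟩ := mem_nhds_iff.1 hball
    have hdiam : EMetric.diam (φ '' (Subtype.val ⁻¹' O)) ≤ ENNReal.ofReal ε := by
      refine EMetric.diam_le ?_
      rintro p ⟨x, hx, rfl⟩ q ⟨y, hy, rfl⟩
      rw [edist_dist]
      refine ENNReal.ofReal_le_ofReal ?_
      have h1 : dist (f (x : K)) (f z) < ε / 2 := hOsub hx
      have h2 : dist (f (y : K)) (f z) < ε / 2 := hOsub hy
      rw [← hfx x, ← hfx y]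
      calc dist (f (x:K)) (f (y:K)) ≤ dist (f (x:K)) (f z) + dist (f z) (f (y:K)) :=
            dist_triangle _ _ _
        _ ≤ ε := by rw [dist_comm (f z)]; linarith
    calc oscAt φ z ≤ EMetric.diam (φ '' (Subtype.val ⁻¹' O)) := by
          refine iInf_le_of_le O (iInf_le_of_le hOopen (iInf_le_of_le hzO le_rfl))
      _ ≤ ENNReal.ofReal ε := hdiam
  refine ENNReal.le_of_forall_pos_le_add ?_
  intro ε hε _
  have := key (ε : ℝ) (by exact_mod_cast hε)
  rw [ENNReal.ofReal_coe_nnreal] at this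
  simpa using this

/-- Extension lemma: a function with zero oscillation at every point extends continuously. -/
lemma ucSet_of_oscAt_zero {K : Type u} [TopologicalSpace K] (hK : IsCompactification K)
    {M : Type v} [MetricSpace M] [CompleteSpace M]
    (φ : ↥(isolatedPoints K) → M) (hosc : ∀ z : K, oscAt φ z = 0) : φ ∈ ucSet K M := by
  set Fz : K → Filter ↥(isolatedPoints K) := fun z => Filter.comap Subtype.val (𝓝 z)
    with hFzdef
  have hNeBot : ∀ z, (Fz z).NeBot := by
    intro z
    rw [Filter.comap_neBot_iff]
    intro t ht
    rcases mem_closure_iff_nhds.1 (hK.2.2 z) t ht with ⟨w, hwt, hw⟩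
    exact ⟨⟨w, hw⟩, hwt⟩
  have hosc' : ∀ z : K, ∀ ε : ℝ, 0 < ε → ∃ O : Set K, IsOpen O ∧ z ∈ O ∧
      EMetric.diam (φ '' (Subtype.val ⁻¹' O)) < ENNReal.ofReal ε := by
    intro z ε hε
    by_contra hcon
    push_neg at hcon
    have hle : ENNReal.ofReal ε ≤ oscAt φ z :=
      le_iInf fun O => le_iInf fun hO => le_iInf fun hz => hcon O hO hz
    rw [hosc z, nonpos_iff_eq_zero, ENNReal.ofReal_eq_zero] at hle
    linarith
  have hcauchy : ∀ z : K, Cauchy (Filter.map φ (Fz z)) := by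
    intro z
    haveI := hNeBot z
    rw [Metric.cauchy_iff]
    refine ⟨(hNeBot z).map φ, ?_⟩
    intro ε hε
    obtain ⟨O, hOopen, hzO, hdiam⟩ := hosc' z ε hε
    refine ⟨φ '' (Subtype.val ⁻¹' O),
      Filter.image_mem_map (Filter.preimage_mem_comap (hOopen.mem_nhds hzO)), ?_⟩
    intro p hp q hq
    have hlt := lt_of_le_of_lt (EMetric.edist_le_diam_of_mem hp hq) hdiam
    rw [edist_dist] at hlt
    exact (ENNReal.ofReal_lt_ofReal_iff hε).1 hlt
  have hlim : ∀ z : K, ∃ m : M, Filter.Tendsto φ (Fz z) (𝓝 m) := fun z =>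
    CompleteSpace.complete (hcauchy z)
  choose f hf using hlim
  refine ⟨f, ?_, ?_⟩
  · rw [continuous_iff_continuousAt]
    intro z
    rw [ContinuousAt, Metric.tendsto_nhds]
    intro ε hε
    obtain ⟨O, hOopen, hzO, hdiam⟩ := hosc' z (ε / 2) (by linarith)
    have hmem : ∀ w ∈ O, f w ∈ closure (φ '' (Subtype.val ⁻¹' O)) := by
      intro w hw
      haveI := hNeBot w
      refine mem_closure_of_tendsto (hf w) ?_
      have hO : Subtype.val ⁻¹' O ∈ Fz w := Filter.preimage_mem_comap (hOopen.mem_nhds hw)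
      filter_upwards [hO] with x hx using Set.mem_image_of_mem φ hx
    filter_upwards [hOopen.mem_nhds hzO] with w hw
    have hedist : edist (f w) (f z) ≤ EMetric.diam (closure (φ '' (Subtype.val ⁻¹' O))) :=
      EMetric.edist_le_diam_of_mem (hmem w hw) (hmem z hzO)
    rw [show EMetric.diam (closure (φ '' (Subtype.val ⁻¹' O))) =
        EMetric.diam (φ '' (Subtype.val ⁻¹' O)) from Metric.ediam_closure _] at hedist
    have hlt := lt_of_le_of_lt hedist hdiam
    rw [edist_dist] at hlt
    have := (ENNReal.ofReal_lt_ofReal_iff (by linarith)).1 hlt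
    linarith
  · intro x
    have hopen : IsOpen ({(x : K)} : Set K) := x.2
    have hpure : 𝓝 (x : K) = pure (x : K) := le_antisymm
      (le_def.2 fun s hs => mem_of_superset (hopen.mem_nhds rfl) (by simpa using hs))
      (pure_le_nhds _)
    have hFz : Fz (x : K) = pure x := by
      rw [show Fz (x : K) = Filter.comap Subtype.val (𝓝 (x : K)) from rfl, hpure,
        ← Filter.principal_singleton, Filter.comap_principal]
      have hset : (Subtype.val ⁻¹' {(x : K)} : Set ↥(isolatedPoints K)) = {x} := by
        ext y; simp [Subtype.ext_iff]
      rw [hset, Filter.principal_singleton]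
    have htd := hf (x : K)
    rw [hFz] at htd
    exact tendsto_nhds_unique htd (tendsto_pure_nhds φ x)

/-- The `M`-compactification is compact (for proper `M`). -/
lemma compactSpace_hComp {Y : Type u₁} (𝓔 : Set (Set (Y × Y))) (M : Type v) [MetricSpace M]
    [ProperSpace M] : CompactSpace (HComp 𝓔 M) := by
  rw [← isCompact_iff_compactSpace]
  set P : Set (↥(soSet 𝓔 M) → M) :=
    Set.pi Set.univ (fun ψ : ↥(soSet 𝓔 M) => closure (Set.range ψ.1)) with hP
  have hPcompact : IsCompact P :=
    isCompact_univ_pi (fun ψ => ψ.2.1.isCompact_closure)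
  have hPclosed : IsClosed P := isClosed_set_pi (fun ψ _ => isClosed_closure)
  have hsub : Set.range (deltaMap 𝓔 M) ⊆ P := by
    rintro - ⟨x, rfl⟩ ψ -
    exact subset_closure ⟨x, rfl⟩
  exact hPcompact.of_isClosed_subset isClosed_closure (closure_minimal hsub hPclosed)

/-- Bounded slowly oscillating functions extend to the `M`-compactification. -/
lemma soSet_subset_ucHComp {Y : Type u₁} (𝓔 : Set (Set (Y × Y))) (M : Type v) [MetricSpace M] :
    soSet 𝓔 M ⊆ ucHComp 𝓔 M := by
  intro φ hφ
  refine ⟨fun z => z.1 ⟨φ, hφ⟩, ?_, fun x => rfl⟩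
  exact (continuous_apply (⟨φ, hφ⟩ : ↥(soSet 𝓔 M))).comp continuous_subtype_val

/-- Restrictions of continuous functions on the `M`-compactification are bounded. -/
lemma bounded_of_ucHComp {Y : Type u₁} {𝓔 : Set (Set (Y × Y))} {M : Type v} [MetricSpace M]
    [ProperSpace M] {φ : Y → M} (hφ : φ ∈ ucHComp 𝓔 M) :
    Bornology.IsBounded (Set.range φ) := by
  haveI := compactSpace_hComp 𝓔 M
  obtain ⟨f, hf, hfx⟩ := hφ
  refine Bornology.IsBounded.subset ((isCompact_univ.image hf).isBounded) ?_
  rintro - ⟨x, rfl⟩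
  exact ⟨deltaEmb 𝓔 M x, trivial, hfx x⟩

/-- Displacement sets of restrictions of continuous functions on the `M`-compactification
of the permutation coarse space are finite. -/
lemma finiteBad_of_ucHComp {K : Type u} [TopologicalSpace K]
    {M : Type v} [MetricSpace M] [ProperSpace M]
    {φ : ↥(isolatedPoints K) → M} (hφ : φ ∈ ucHComp (permCoarse (homeoPerms K)) M)
    (σ : Equiv.Perm ↥(isolatedPoints K)) (hσ : σ ∈ homeoPerms K) (ε : ℝ) (hε : 0 < ε) :
    {x : ↥(isolatedPoints K) | ε ≤ dist (φ (σ x)) (φ x)}.Finite := by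
  classical
  set 𝓔 := permCoarse (homeoPerms K) with h𝓔
  haveI := compactSpace_hComp 𝓔 M
  obtain ⟨f, hf, hfx⟩ := hφ
  by_contra hinf
  set S := {x : ↥(isolatedPoints K) | ε ≤ dist (φ (σ x)) (φ x)} with hS
  have hinf' : S.Infinite := hinf
  let e := hinf'.natEmbedding
  let xn : ℕ → ↥(isolatedPoints K) := fun n => ((e n : ↥S) : ↥(isolatedPoints K))
  have hxninj : Function.Injective xn := fun m n hmn => e.injective (Subtype.ext hmn)
  obtain ⟨𝒰, h𝒰⟩ : ∃ 𝒰 : Ultrafilter ℕ, (𝒰 : Filter ℕ) ≤ cofinite :=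
    ⟨Ultrafilter.of cofinite, Ultrafilter.of_le _⟩
  have hE1 : permEnt (({σ} : Finset (Equiv.Perm ↥(isolatedPoints K))) :
      Set (Equiv.Perm ↥(isolatedPoints K))) ∈ 𝓔 :=
    permEnt_mem_permCoarse _ {σ} (by simp [hσ])
  set δ : ↥(isolatedPoints K) → HComp 𝓔 M := deltaEmb 𝓔 M with hδ
  obtain ⟨p, -, hp⟩ := isCompact_univ.ultrafilter_le_nhds (𝒰.map (fun n => δ (xn n)))
    (by simp [Filter.le_principal_iff])
  obtain ⟨q, -, hq⟩ := isCompact_univ.ultrafilter_le_nhds (𝒰.map (fun n => δ (σ (xn n))))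
    (by simp [Filter.le_principal_iff])
  have hcoordp : ∀ ψ : ↥(soSet 𝓔 M), Tendsto (fun n => ψ.1 (xn n)) (𝒰 : Filter ℕ) (𝓝 (p.1 ψ)) := by
    intro ψ
    have hc : Continuous (fun z : HComp 𝓔 M => z.1 ψ) :=
      (continuous_apply ψ).comp continuous_subtype_val
    exact (hc.tendsto p).comp hp
  have hcoordq : ∀ ψ : ↥(soSet 𝓔 M),
      Tendsto (fun n => ψ.1 (σ (xn n))) (𝒰 : Filter ℕ) (𝓝 (q.1 ψ)) := by
    intro ψ
    have hc : Continuous (fun z : HComp 𝓔 M => z.1 ψ) :=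
      (continuous_apply ψ).comp continuous_subtype_val
    exact (hc.tendsto q).comp hq
  have hdist0 : ∀ ψ : ↥(soSet 𝓔 M),
      Tendsto (fun n => dist (ψ.1 (xn n)) (ψ.1 (σ (xn n)))) (𝒰 : Filter ℕ) (𝓝 0) := by
    intro ψ
    rw [Metric.tendsto_nhds]
    intro η hη
    obtain ⟨B, hBbdd, hBsmall⟩ := ψ.2.2 η hη _ hE1
    have hBfin : B.Finite := bounded_finite hBbdd
    have hfinidx : {n : ℕ | xn n ∈ B}.Finite := by
      have : {n : ℕ | xn n ∈ B} = xn ⁻¹' B := rfl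
      rw [this]
      exact Set.Finite.preimage (Set.injOn_of_injective hxninj) hBfin
    filter_upwards [h𝒰 hfinidx.compl_mem_cofinite] with n hn
    have hsmall := hBsmall (xn n) hn
    have h1 : σ (xn n) ∈ entBall (permEnt (({σ} : Finset (Equiv.Perm _)) : Set _)) (xn n) :=
      Or.inr ⟨σ, by simp, rfl⟩
    have h2 : xn n ∈ entBall (permEnt (({σ} : Finset (Equiv.Perm _)) : Set _)) (xn n) :=
      Or.inl rfl
    have hedist := lt_of_le_of_lt
      (EMetric.edist_le_diam_of_mem (Set.mem_image_of_mem _ h2) (Set.mem_image_of_mem _ h1))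
      hsmall
    rw [edist_dist] at hedist
    have := (ENNReal.ofReal_lt_ofReal_iff hη).1 hedist
    rw [Real.dist_eq, sub_zero, abs_of_nonneg dist_nonneg]
    exact this
  have hpq : p = q := by
    refine Subtype.ext (funext fun ψ => ?_)
    exact tendsto_nhds_unique ((hcoordp ψ).congr_dist (hdist0 ψ)) (hcoordq ψ)
  have hfp : Tendsto (fun n => f (δ (xn n))) (𝒰 : Filter ℕ) (𝓝 (f p)) :=
    (hf.tendsto p).comp hp
  have hfq : Tendsto (fun n => f (δ (σ (xn n)))) (𝒰 : Filter ℕ) (𝓝 (f p)) := by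
    rw [hpq]
    exact (hf.tendsto q).comp hq
  have hd : Tendsto (fun n => dist (φ (σ (xn n))) (φ (xn n))) (𝒰 : Filter ℕ) (𝓝 0) := by
    have := hfq.dist hfp
    rw [dist_self] at this
    refine this.congr fun n => ?_
    rw [show f (δ (σ (xn n))) = φ (σ (xn n)) from hfx _,
      show f (δ (xn n)) = φ (xn n) from hfx _]
  have hle : ε ≤ 0 := ge_of_tendsto hd (Eventually.of_forall fun n => (e n).2)
  linarith

end Aux

/-- A compactification `K` is `M`-equivalent to the `M`-compactification of
its permutation coarse space `(K', 𝓔_{K',K})` if and only if `K` is `M`-soft. -/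
theorem statement5 (K : Type u) [TopologicalSpace K] (hK : IsCompactification K)
    (M : Type v) [MetricSpace M] [ProperSpace M] [Nontrivial M] :
    ucSet K M = ucHComp (permCoarse (homeoPerms K)) M ↔ IsMSoft K M := by
  classical
  rcases isEmpty_or_nonempty ↥(isolatedPoints K) with hempty | hne
  · -- degenerate case: no isolated points, hence `K` is empty
    have hKempty : IsEmpty K := by
      have hd := hK.2.2
      have hiso : isolatedPoints K = (∅ : Set K) := by
        ext w
        exact ⟨fun hw => (hempty.false ⟨w, hw⟩).elim, fun h => h.elim⟩
      rw [hiso] at hd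
      refine ⟨fun k => ?_⟩
      have := hd k
      simpa [closure_empty] using this
    constructor
    · intro _ φ _ hz
      obtain ⟨z, _⟩ := hz
      exact (hKempty.false z).elim
    · intro _
      ext φ
      obtain ⟨m⟩ : Nonempty M := inferInstance
      constructor
      · rintro -
        exact ⟨fun _ => m, continuous_const, fun x => (hempty.false x).elim⟩
      · rintro -
        exact ⟨fun _ => m, continuous_const, fun x => (hempty.false x).elim⟩
  · constructor
    · -- M-equivalence implies M-softness
      intro hEq φ hb hz
      obtain ⟨z, hzpos⟩ := hz
      by_contra hcon
      push_neg at hcon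
      have hfin : ∀ σ ∈ homeoPerms K, ∀ ε : ℝ, 0 < ε →
          {x : ↥(isolatedPoints K) | ε ≤ dist (φ (σ x)) (φ x)}.Finite := by
        intro σ hσ ε hε
        rw [← Set.not_infinite]
        exact Set.not_infinite.2 (hcon σ hσ ε hε)
      have hmem : φ ∈ soSet (permCoarse (homeoPerms K)) M := ⟨hb, so_of_finiteBad hK φ hfin⟩
      have hmem2 : φ ∈ ucSet K M := by
        rw [hEq]; exact soSet_subset_ucHComp _ _ hmem
      have h0 := oscAt_eq_zero_of_ucSet hmem2 z
      rw [h0] at hzpos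
      exact lt_irrefl _ hzpos
    · -- M-softness implies M-equivalence
      intro hsoft
      ext φ
      constructor
      · intro hφ
        obtain ⟨fK, hfK, hfKx⟩ := hφ
        have hfin : ∀ σ ∈ homeoPerms K, ∀ ε : ℝ, 0 < ε →
            {x : ↥(isolatedPoints K) | ε ≤ dist (φ (σ x)) (φ x)}.Finite := by
          intro σ hσ ε hε
          have hthis := finiteBad_of_continuous hK fK hfK σ hσ ε hε
          have hset : {x : ↥(isolatedPoints K) | ε ≤ dist (fK ((σ x) : K)) (fK (x : K))} =
              {x : ↥(isolatedPoints K) | ε ≤ dist (φ (σ x)) (φ x)} := by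
            ext x
            rw [Set.mem_setOf_eq, Set.mem_setOf_eq, hfKx, hfKx]
          rw [← hset]
          exact hthis
        exact soSet_subset_ucHComp _ _
          ⟨bounded_of_ucSet hK ⟨fK, hfK, hfKx⟩, so_of_finiteBad hK φ hfin⟩
      · intro hφ
        by_contra hnot
        have hosc : ∃ z : K, oscAt φ z ≠ 0 := by
          by_contra hall
          push_neg at hall
          exact hnot (ucSet_of_oscAt_zero hK φ hall)
        obtain ⟨z, hz⟩ := hosc
        obtain ⟨σ, hσ, ε, hε, hinf⟩ :=
          hsoft φ (bounded_of_ucHComp hφ) ⟨z, pos_iff_ne_zero.2 hz⟩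
        exact hinf (finiteBad_of_ucHComp hφ σ hσ ε hε)
end
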